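/- arXiv:2308.05772 — 6 statements merged into one kernel-verified Lean document; each statement's English description precedes it below -/
import Mathlib

section
/- Let M be an even delta-matroid and x, y two distinct elements of its ground set. Then x and y belong to the same component of M if and only if there exist bases B1 and B2 of M with B1 △ B2 = {x, y}. -/
open scoped symmDiff

/-- A delta-matroid: a finite ground set `E` and a nonempty family `B` of subsets of `E`
satisfying the symmetric exchange axiom. -/
structure DeltaMatroid (α : Type*) [DecidableEq α] where
  E : Finset α
  B : Finset (Finset α)
  nonempty : B.Nonempty
  subset_ground : ∀ S ∈ B, S ⊆ E
  exchange : ∀ B₁ ∈ B, ∀ B₂ ∈ B, ∀ e ∈ B₁ ∆ B₂,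
    ∃ f ∈ B₁ ∆ B₂, B₁ ∆ ({e, f} : Finset α) ∈ B

variable {α : Type*} [DecidableEq α]

/-- A delta-matroid is even if all bases have cardinalities of the same parity. -/
def DeltaMatroid.IsEven (M : DeltaMatroid α) : Prop :=
  ∀ B₁ ∈ M.B, ∀ B₂ ∈ M.B, B₁.card % 2 = B₂.card % 2

/-- `X` is a separator of `M` if `M` is the direct sum of its restrictions to `X`
and to `E \ X`; equivalently, bases can be freely recombined across `X`. -/
def DeltaMatroid.IsSeparator (M : DeltaMatroid α) (X : Finset α) : Prop :=
  X ⊆ M.E ∧ ∀ B₁ ∈ M.B, ∀ B₂ ∈ M.B, (B₁ ∩ X) ∪ (B₂ \ X) ∈ M.B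

/-- A component is a minimal nonempty separator. -/
def DeltaMatroid.IsComponent (M : DeltaMatroid α) (C : Finset α) : Prop :=
  M.IsSeparator C ∧ C.Nonempty ∧
    ∀ X, M.IsSeparator X → X.Nonempty → X ⊆ C → X = C

/-- The basis graph of a delta-matroid: vertices are the bases, two bases being
adjacent iff their symmetric difference has exactly two elements. -/
def DeltaMatroid.BG (M : DeltaMatroid α) : SimpleGraph ↥M.B where
  Adj S T := ((S : Finset α) ∆ (T : Finset α)).card = 2
  symm := by
    constructor
    intro S T h
    rwa [symmDiff_comm]
  loopless := by
    constructor
    intro S h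
    simp [symmDiff_self] at h

/-- The graph `G` has a cycle of length `k` through the edge `e`. -/
def CycleThroughEdge {V : Type*} (G : SimpleGraph V) (e : Sym2 V) (k : ℕ) : Prop :=
  ∃ (v : V) (c : G.Walk v v), c.IsCycle ∧ c.length = k ∧ e ∈ c.edges

/-- An edge is pancyclic if it lies in a cycle of every length `3 ≤ k ≤ n`. -/
def EdgePancyclic {V : Type*} [Fintype V] (G : SimpleGraph V) (e : Sym2 V) : Prop :=
  ∀ k, 3 ≤ k → k ≤ Fintype.card V → CycleThroughEdge G e k

/-- An edge is almost pancyclic if it lies in a cycle of every length `4 ≤ k ≤ n`. -/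
def EdgeAlmostPancyclic {V : Type*} [Fintype V] (G : SimpleGraph V) (e : Sym2 V) : Prop :=
  ∀ k, 4 ≤ k → k ≤ Fintype.card V → CycleThroughEdge G e k

/-- An edge is even pancyclic if it lies in a cycle of length `k` for every
`3 ≤ k ≤ n` with `k` even or `k = n`. -/
def EdgeEvenPancyclic {V : Type*} [Fintype V] (G : SimpleGraph V) (e : Sym2 V) : Prop :=
  ∀ k, 3 ≤ k → k ≤ Fintype.card V → (Even k ∨ k = Fintype.card V) →
    CycleThroughEdge G e k

/-- The hypercube graph `Q_d`: vertices `{0,1}^d`, adjacent iff they differ in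
exactly one coordinate. -/
def hypercube (d : ℕ) : SimpleGraph (Fin d → Bool) where
  Adj x y := ∃ i, x i ≠ y i ∧ ∀ j, j ≠ i → x j = y j
  symm := by
    constructor
    rintro x y ⟨i, h, hj⟩
    exact ⟨i, h.symm, fun j hne => (hj j hne).symm⟩
  loopless := by
    constructor
    rintro x ⟨i, h, -⟩
    exact h rfl

namespace DM6

open Finset

variable {α : Type*} [DecidableEq α]

/-! ### Symmetric difference toolkit -/

lemma sd_card_parity (U V : Finset α) : (U ∆ V).card % 2 = (U.card + V.card) % 2 := by
  have h1 : U ∆ V = (U ∪ V) \ (U ∩ V) := by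
    rw [symmDiff_eq_sup_sdiff_inf]; rfl
  have h2 := Finset.card_union_add_card_inter U V
  have h3 : (U ∩ V) ⊆ (U ∪ V) := Finset.inter_subset_union
  have h5 : (U ∩ V).card ≤ (U ∪ V).card := Finset.card_le_card h3
  rw [h1, Finset.card_sdiff_of_subset h3]
  omega

lemma sd_pair_pair {u v w : α} (huv : u ≠ v) (huw : u ≠ w) (hvw : v ≠ w) :
    ({u, v} : Finset α) ∆ {u, w} = {v, w} := by
  ext a
  by_cases h1 : a = u <;> by_cases h2 : a = v <;> by_cases h3 : a = w <;>
    simp_all [Finset.mem_symmDiff]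

lemma sd_pair_pair4 {u v a b : α} (huv : u ≠ v) (hua : u ≠ a) (hub : u ≠ b)
    (hva : v ≠ a) (hvb : v ≠ b) (hab : a ≠ b) :
    ({u, v} : Finset α) ∆ {a, b} = {u, v, a, b} := by
  ext t
  by_cases h1 : t = u <;> by_cases h2 : t = v <;> by_cases h3 : t = a <;> by_cases h4 : t = b <;>
    simp_all [Finset.mem_symmDiff]

lemma card_quad {u v a b : α} (huv : u ≠ v) (hua : u ≠ a) (hub : u ≠ b)
    (hva : v ≠ a) (hvb : v ≠ b) (hab : a ≠ b) :
    ({u, v, a, b} : Finset α).card = 4 := by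
  rw [Finset.card_insert_of_notMem (by simp [huv, hua, hub]),
      Finset.card_insert_of_notMem (by simp [hva, hvb]),
      Finset.card_insert_of_notMem (by simp [hab]), Finset.card_singleton]

lemma sd_of_subset {S T : Finset α} (h : T ⊆ S) : S ∆ T = S \ T := by
  ext a
  simp only [Finset.mem_symmDiff, Finset.mem_sdiff]
  constructor
  · rintro (⟨h1, h2⟩ | ⟨h1, h2⟩)
    · exact ⟨h1, h2⟩
    · exact absurd (h h1) h2
  · exact fun ⟨h1, h2⟩ => Or.inl ⟨h1, h2⟩

lemma sd_sd {F P Q : Finset α} : (F ∆ P) ∆ (F ∆ Q) = P ∆ Q := by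
  rw [symmDiff_comm F P, symmDiff_assoc, symmDiff_symmDiff_cancel_left]

lemma sd_flip_eq {F P Q R : Finset α} (h : P ∆ Q = R) : (F ∆ P) ∆ Q = F ∆ R := by
  rw [symmDiff_assoc, h]

end DM6
namespace DM6

open Finset

variable {α : Type*} [DecidableEq α]

/-! ### Exchange with distinct partner -/

lemma exchange' (M : DeltaMatroid α) (hM : M.IsEven) {B₁ B₂ : Finset α}
    (h₁ : B₁ ∈ M.B) (h₂ : B₂ ∈ M.B) {e : α} (he : e ∈ B₁ ∆ B₂) :
    ∃ f ∈ B₁ ∆ B₂, f ≠ e ∧ B₁ ∆ {e, f} ∈ M.B := by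
  obtain ⟨f, hf, hB⟩ := M.exchange B₁ h₁ B₂ h₂ e he
  refine ⟨f, hf, ?_, hB⟩
  intro hfe
  rw [hfe, show ({e, e} : Finset α) = {e} from by simp] at hB
  have hpar := sd_card_parity B₁ ({e} : Finset α)
  have heq := hM B₁ h₁ _ hB
  simp only [Finset.card_singleton] at hpar
  omega

/-! ### The relation: two bases differing exactly by a pair -/

def Rel (M : DeltaMatroid α) (x y : α) : Prop :=
  x ≠ y ∧ ∃ B₁ ∈ M.B, ∃ B₂ ∈ M.B, B₁ ∆ B₂ = {x, y}

lemma Rel.symm {M : DeltaMatroid α} {x y : α} (h : Rel M x y) : Rel M y x := by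
  obtain ⟨hxy, B₁, h₁, B₂, h₂, hd⟩ := h
  exact ⟨hxy.symm, B₁, h₁, B₂, h₂, by rw [hd, Finset.pair_comm]⟩

lemma rel_of_mem {M : DeltaMatroid α} {F : Finset α} {x y : α} (hF : F ∈ M.B)
    (hF2 : F ∆ {x, y} ∈ M.B) (hxy : x ≠ y) : Rel M x y :=
  ⟨hxy, F, hF, F ∆ {x, y}, hF2, by rw [symmDiff_symmDiff_cancel_left]⟩

/-! ### Fundamental graphs -/

def SG (M : DeltaMatroid α) (F : Finset α) : SimpleGraph α where
  Adj u v := u ≠ v ∧ F ∆ {u, v} ∈ M.B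
  symm := by
    constructor
    rintro u v ⟨h1, h2⟩
    exact ⟨h1.symm, by rwa [Finset.pair_comm]⟩
  loopless := ⟨fun u h => h.1 rfl⟩

lemma adj_def {M : DeltaMatroid α} {F : Finset α} {u v : α} :
    (SG M F).Adj u v ↔ u ≠ v ∧ F ∆ {u, v} ∈ M.B := Iff.rfl

lemma rel_of_adj {M : DeltaMatroid α} {F : Finset α} {x y : α} (hF : F ∈ M.B)
    (h : (SG M F).Adj x y) : Rel M x y := rel_of_mem hF h.2 h.1

/-! ### Symmetric exchange at distance four -/

lemma quad_sd_pair {e v u t : α} (hev : e ≠ v) (heu : e ≠ u) (het : e ≠ t)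
    (hvu : v ≠ u) (hvt : v ≠ t) (hut : u ≠ t) :
    ({e, v, u, t} : Finset α) ∆ {e, t} = {v, u} := by
  ext a
  by_cases h1 : a = e <;> by_cases h2 : a = v <;> by_cases h3 : a = u <;>
    by_cases h4 : a = t <;> simp_all [Finset.mem_symmDiff]

lemma sea4_aux {M : DeltaMatroid α} (hM : M.IsEven) {X Y : Finset α}
    (hX : X ∈ M.B) (hY : Y ∈ M.B) (hc : (X ∆ Y).card = 4) {e v : α}
    (he : e ∈ X ∆ Y) (hv : v ∈ X ∆ Y) (hve : v ≠ e) :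
    (X ∆ {e, v} ∈ M.B) ∨ ∃ t ∈ X ∆ Y, t ≠ e ∧ t ≠ v ∧ Y ∆ {e, t} ∈ M.B := by
  obtain ⟨u, hu, huv, hXu⟩ := exchange' M hM hX hY hv
  by_cases hue : u = e
  · subst hue
    left
    rwa [Finset.pair_comm] at hXu
  · right
    have hsub : ({e, v, u} : Finset α) ⊆ X ∆ Y := by
      intro a ha
      simp only [Finset.mem_insert, Finset.mem_singleton] at ha
      rcases ha with rfl | rfl | rfl <;> assumption
    have hcard3 : ({e, v, u} : Finset α).card = 3 := by
      rw [Finset.card_insert_of_notMem (by simp [Ne.symm hve, Ne.symm hue]),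
          Finset.card_insert_of_notMem (by simp [Ne.symm huv]), Finset.card_singleton]
    have hone : ((X ∆ Y) \ {e, v, u}).card = 1 := by
      rw [Finset.card_sdiff_of_subset hsub, hc, hcard3]
    obtain ⟨t, ht⟩ := Finset.card_eq_one.1 hone
    have htm : t ∈ (X ∆ Y) \ {e, v, u} := by rw [ht]; exact Finset.mem_singleton_self t
    rw [Finset.mem_sdiff] at htm
    obtain ⟨htD, htne⟩ := htm
    simp only [Finset.mem_insert, Finset.mem_singleton, not_or] at htne
    obtain ⟨hte, htv, htu⟩ := htne
    refine ⟨t, htD, hte, htv, ?_⟩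
    have hquad : ({e, v, u, t} : Finset α) = X ∆ Y := by
      apply Finset.eq_of_subset_of_card_le
      · intro a ha
        simp only [Finset.mem_insert, Finset.mem_singleton] at ha
        rcases ha with rfl | rfl | rfl | rfl <;> assumption
      · rw [hc, card_quad (Ne.symm hve) (Ne.symm hue) (Ne.symm hte) (Ne.symm huv)
          (Ne.symm htv) (Ne.symm htu)]
    have hpairs : (X ∆ Y) ∆ {e, t} = {v, u} := by
      rw [← hquad]
      exact quad_sd_pair (Ne.symm hve) (Ne.symm hue) (Ne.symm hte) (Ne.symm huv)
        (Ne.symm htv) (Ne.symm htu)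
    have hYeq : Y ∆ {e, t} = X ∆ {v, u} := by
      have h0 : Y = X ∆ (X ∆ Y) := (symmDiff_symmDiff_cancel_left X Y).symm
      rw [h0, symmDiff_assoc, hpairs]
    rw [hYeq]
    exact hXu

lemma sea4 {M : DeltaMatroid α} (hM : M.IsEven) {A B : Finset α}
    (hA : A ∈ M.B) (hB : B ∈ M.B) (hc : (A ∆ B).card = 4) {e : α} (he : e ∈ A ∆ B) :
    ∃ f ∈ A ∆ B, f ≠ e ∧ A ∆ {e, f} ∈ M.B ∧ B ∆ {e, f} ∈ M.B := by
  classical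
  by_contra hcon
  push_neg at hcon
  have hc' : (B ∆ A).card = 4 := by rwa [symmDiff_comm]
  have he' : e ∈ B ∆ A := by rwa [symmDiff_comm]
  set rest := (A ∆ B).erase e with hrest
  have hrestcard : rest.card = 3 := by rw [hrest, Finset.card_erase_of_mem he, hc]
  set Pa := rest.filter (fun v => A ∆ {e, v} ∈ M.B) with hPa
  set Pb := rest.filter (fun v => B ∆ {e, v} ∈ M.B) with hPb
  have hdisj : ∀ f, f ∈ Pa → f ∈ Pb → False := by
    intro f hfa hfb
    rw [hPa, Finset.mem_filter] at hfa
    rw [hPb, Finset.mem_filter] at hfb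
    exact hcon f (Finset.mem_of_mem_erase hfa.1) (Finset.ne_of_mem_erase hfa.1) hfa.2 hfb.2
  have claimA : ∀ v ∈ rest, v ∈ Pa ∨ ∃ t ∈ Pb, t ≠ v := by
    intro v hv
    have hvD : v ∈ A ∆ B := Finset.mem_of_mem_erase hv
    have hvne : v ≠ e := Finset.ne_of_mem_erase hv
    rcases sea4_aux hM hA hB hc he hvD hvne with h | ⟨t, htD, hte, htv, hYt⟩
    · exact Or.inl (Finset.mem_filter.2 ⟨hv, h⟩)
    · exact Or.inr ⟨t, Finset.mem_filter.2 ⟨Finset.mem_erase.2 ⟨hte, htD⟩, hYt⟩, htv⟩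
  have claimB : ∀ v ∈ rest, v ∈ Pb ∨ ∃ t ∈ Pa, t ≠ v := by
    intro v hv
    have hvD : v ∈ B ∆ A := by
      rw [symmDiff_comm]; exact Finset.mem_of_mem_erase hv
    have hvne : v ≠ e := Finset.ne_of_mem_erase hv
    rcases sea4_aux hM hB hA hc' he' hvD hvne with h | ⟨t, htD, hte, htv, hYt⟩
    · exact Or.inl (Finset.mem_filter.2 ⟨hv, h⟩)
    · refine Or.inr ⟨t, Finset.mem_filter.2 ⟨Finset.mem_erase.2 ⟨hte, ?_⟩, hYt⟩, htv⟩
      rwa [symmDiff_comm] at htD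
  have keyA : Pa.Nonempty := by
    obtain ⟨f, hf, hfe, hAf⟩ := exchange' M hM hA hB he
    exact ⟨f, Finset.mem_filter.2 ⟨Finset.mem_erase.2 ⟨hfe, hf⟩, hAf⟩⟩
  have keyB : Pb.Nonempty := by
    obtain ⟨f, hf, hfe, hBf⟩ := exchange' M hM hB hA he'
    refine ⟨f, Finset.mem_filter.2 ⟨Finset.mem_erase.2 ⟨hfe, ?_⟩, hBf⟩⟩
    rwa [symmDiff_comm] at hf
  have h2a : 1 < Pa.card := by
    obtain ⟨w, hw⟩ := keyA
    rcases claimB w (Finset.mem_of_mem_filter w hw) with hb | ⟨s, hs, hsw⟩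
    · exact absurd hb (fun hb => hdisj w hw hb)
    · exact Finset.one_lt_card.2 ⟨s, hs, w, hw, hsw⟩
  have h2b : 1 < Pb.card := by
    obtain ⟨w, hw⟩ := keyB
    rcases claimA w (Finset.mem_of_mem_filter w hw) with ha | ⟨s, hs, hsw⟩
    · exact absurd ha (fun ha => hdisj w ha hw)
    · exact Finset.one_lt_card.2 ⟨s, hs, w, hw, hsw⟩
  have hsub : Pa ∪ Pb ⊆ rest :=
    Finset.union_subset (Finset.filter_subset _ _) (Finset.filter_subset _ _)
  have hdisj' : Disjoint Pa Pb := Finset.disjoint_left.2 fun {f} hfa hfb => hdisj f hfa hfb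
  have hcu := Finset.card_union_of_disjoint hdisj'
  have hle := Finset.card_le_card hsub
  omega

end DM6
namespace DM6

open Finset SimpleGraph

variable {α : Type*} [DecidableEq α]

/-! ### Transferring edges between fundamental graphs of adjacent bases -/

lemma edge_transfer {M : DeltaMatroid α} (hM : M.IsEven) {F : Finset α} {a b u v : α}
    (hF : F ∈ M.B) (hab : a ≠ b) (hF2 : F ∆ {a, b} ∈ M.B)
    (huv : (SG M F).Adj u v) (hua : u ≠ a) (hub : u ≠ b) (hva : v ≠ a) (hvb : v ≠ b) :
    (SG M (F ∆ {a, b})).Adj u v ∨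
      ((SG M (F ∆ {a, b})).Adj u a ∧ (SG M (F ∆ {a, b})).Adj a b ∧
        (SG M (F ∆ {a, b})).Adj b v) ∨
      ((SG M (F ∆ {a, b})).Adj u b ∧ (SG M (F ∆ {a, b})).Adj b a ∧
        (SG M (F ∆ {a, b})).Adj a v) := by
  obtain ⟨huvne, hX⟩ := huv
  have hADJab : (SG M (F ∆ {a, b})).Adj a b :=
    ⟨hab, by rw [symmDiff_symmDiff_cancel_right]; exact hF⟩
  have hdiff : (F ∆ {u, v}) ∆ (F ∆ {a, b}) = {u, v, a, b} := by
    rw [sd_sd, sd_pair_pair4 huvne hua hub hva hvb hab]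
  have hcard : ((F ∆ {u, v}) ∆ (F ∆ {a, b})).card = 4 := by
    rw [hdiff]; exact card_quad huvne hua hub hva hvb hab
  have hu : u ∈ (F ∆ {u, v}) ∆ (F ∆ {a, b}) := by rw [hdiff]; simp
  obtain ⟨g, hg, hgu, h1, h2⟩ := sea4 hM hX hF2 hcard hu
  rw [hdiff] at hg
  simp only [Finset.mem_insert, Finset.mem_singleton] at hg
  rcases hg with hg | hg | hg | hg
  · exact absurd hg hgu
  · rw [hg] at h2
    exact Or.inl ⟨huvne, h2⟩
  · -- g = a
    rw [hg] at h1 h2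
    refine Or.inr (Or.inl ⟨⟨hua, h2⟩, hADJab, ⟨Ne.symm hvb, ?_⟩⟩)
    have e1 : ({a, b} : Finset α) ∆ {b, v} = {a, v} := by
      rw [Finset.pair_comm a b]; exact sd_pair_pair hab.symm (Ne.symm hvb) (Ne.symm hva)
    have e2 : ({u, v} : Finset α) ∆ {u, a} = {v, a} := sd_pair_pair huvne hua hva
    rw [sd_flip_eq e1, Finset.pair_comm a v, ← sd_flip_eq e2]
    exact h1
  · -- g = b
    rw [hg] at h1 h2
    refine Or.inr (Or.inr ⟨⟨hub, h2⟩, hADJab.symm, ⟨Ne.symm hva, ?_⟩⟩)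
    have e1 : ({a, b} : Finset α) ∆ {a, v} = {b, v} :=
      sd_pair_pair hab (Ne.symm hva) (Ne.symm hvb)
    have e2 : ({u, v} : Finset α) ∆ {u, b} = {v, b} := sd_pair_pair huvne hub hvb
    rw [sd_flip_eq e1, Finset.pair_comm b v, ← sd_flip_eq e2]
    exact h1

/-- Transferring a walk avoiding `{a,b}`: either it transfers with no greater
length, or we get a short-cut walk from the start to `b`. -/
lemma transfer_walk {M : DeltaMatroid α} (hM : M.IsEven) {F : Finset α} {a b : α}
    (hF : F ∈ M.B) (hab : a ≠ b) (hF2 : F ∆ {a, b} ∈ M.B) {u t : α}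
    (W : (SG M F).Walk u t) (hsup : ∀ s ∈ W.support, s ≠ a ∧ s ≠ b) :
    (∃ W' : (SG M (F ∆ {a, b})).Walk u t, W'.length ≤ W.length) ∨
      (∃ W' : (SG M (F ∆ {a, b})).Walk u b, W'.length ≤ W.length + 1) := by
  induction W with
  | nil => exact Or.inl ⟨SimpleGraph.Walk.nil, le_refl _⟩
  | @cons p q r hadj W₀ ih =>
    have hp := hsup p (by simp [SimpleGraph.Walk.support_cons])
    have hq := hsup q (by simp [SimpleGraph.Walk.support_cons, W₀.start_mem_support])
    have hsup₀ : ∀ s ∈ W₀.support, s ≠ a ∧ s ≠ b := fun s hs =>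
      hsup s (by simp [SimpleGraph.Walk.support_cons, hs])
    rcases edge_transfer hM hF hab hF2 hadj hp.1 hp.2 hq.1 hq.2 with
      hdir | ⟨h1, h2, h3⟩ | ⟨h1, h2, h3⟩
    · rcases ih hsup₀ with ⟨W', hW'⟩ | ⟨W', hW'⟩
      · exact Or.inl ⟨SimpleGraph.Walk.cons hdir W', by
          simp only [SimpleGraph.Walk.length_cons]; omega⟩
      · exact Or.inr ⟨SimpleGraph.Walk.cons hdir W', by
          simp only [SimpleGraph.Walk.length_cons]; omega⟩
    · exact Or.inr ⟨SimpleGraph.Walk.cons h1 (SimpleGraph.Walk.cons h2 SimpleGraph.Walk.nil), by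
        simp only [SimpleGraph.Walk.length_cons, SimpleGraph.Walk.length_nil]; omega⟩
    · exact Or.inr ⟨SimpleGraph.Walk.cons h1 SimpleGraph.Walk.nil, by
        simp only [SimpleGraph.Walk.length_cons, SimpleGraph.Walk.length_nil]; omega⟩

/-! ### Invariance of reachability under change of base -/

lemma edge_reach {M : DeltaMatroid α} (hM : M.IsEven) {F : Finset α} {a b : α}
    (hF : F ∈ M.B) (hab : a ≠ b) (hF2 : F ∆ {a, b} ∈ M.B) {u v : α}
    (h : (SG M F).Adj u v) : (SG M (F ∆ {a, b})).Reachable u v := by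
  have hADJab : (SG M (F ∆ {a, b})).Adj a b :=
    ⟨hab, by rw [symmDiff_symmDiff_cancel_right]; exact hF⟩
  obtain ⟨huv, hX⟩ := h
  by_cases hua : u = a
  · rw [hua] at hX ⊢
    by_cases hvb : v = b
    · rw [hvb]; exact hADJab.reachable
    · have hav : a ≠ v := by rw [← hua]; exact huv
      have h2 : (SG M (F ∆ {a, b})).Adj b v := by
        refine ⟨fun h' => hvb h'.symm, ?_⟩
        have e1 : ({a, b} : Finset α) ∆ {b, v} = {a, v} := by
          rw [Finset.pair_comm a b]
          exact sd_pair_pair hab.symm (fun h' => hvb h'.symm) hav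
        rw [sd_flip_eq e1]; exact hX
      exact hADJab.reachable.trans h2.reachable
  · by_cases hub : u = b
    · rw [hub] at hX ⊢
      by_cases hva : v = a
      · rw [hva]; exact hADJab.symm.reachable
      · have hbv : b ≠ v := by rw [← hub]; exact huv
        have h2 : (SG M (F ∆ {a, b})).Adj a v := by
          refine ⟨fun h' => hva h'.symm, ?_⟩
          have e1 : ({a, b} : Finset α) ∆ {a, v} = {b, v} :=
            sd_pair_pair hab (fun h' => hva h'.symm) hbv
          rw [sd_flip_eq e1]; exact hX
        exact hADJab.symm.reachable.trans h2.reachable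
    · by_cases hva : v = a
      · rw [hva] at hX ⊢
        have h2 : (SG M (F ∆ {a, b})).Adj u b := by
          refine ⟨hub, ?_⟩
          have e1 : ({a, b} : Finset α) ∆ {b, u} = {a, u} := by
            rw [Finset.pair_comm a b]
            exact sd_pair_pair hab.symm (Ne.symm hub) (Ne.symm hua)
          rw [Finset.pair_comm u b, sd_flip_eq e1, Finset.pair_comm a u]; exact hX
        exact h2.reachable.trans hADJab.symm.reachable
      · by_cases hvb : v = b
        · rw [hvb] at hX ⊢
          have h2 : (SG M (F ∆ {a, b})).Adj u a := by
            refine ⟨hua, ?_⟩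
            have e1 : ({a, b} : Finset α) ∆ {a, u} = {b, u} :=
              sd_pair_pair hab (Ne.symm hua) (Ne.symm hub)
            rw [Finset.pair_comm u a, sd_flip_eq e1, Finset.pair_comm b u]; exact hX
          exact h2.reachable.trans hADJab.reachable
        · rcases edge_transfer hM hF hab hF2 ⟨huv, hX⟩ hua hub hva hvb with
            hdir | ⟨h1, h2, h3⟩ | ⟨h1, h2, h3⟩
          · exact hdir.reachable
          · exact h1.reachable.trans (h2.reachable.trans h3.reachable)
          · exact h1.reachable.trans (h2.reachable.trans h3.reachable)

lemma reach_flip {M : DeltaMatroid α} (hM : M.IsEven) {F : Finset α} {a b : α}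
    (hF : F ∈ M.B) (hab : a ≠ b) (hF2 : F ∆ {a, b} ∈ M.B) {u v : α}
    (h : (SG M F).Reachable u v) : (SG M (F ∆ {a, b})).Reachable u v := by
  obtain ⟨W⟩ := h
  induction W with
  | nil => exact SimpleGraph.Reachable.refl _
  | cons hadj W ih => exact (edge_reach hM hF hab hF2 hadj).trans ih

lemma reach_any {M : DeltaMatroid α} (hM : M.IsEven) :
    ∀ n (F F' : Finset α), F ∈ M.B → F' ∈ M.B → (F ∆ F').card ≤ n →
      ∀ u v : α, (SG M F).Reachable u v → (SG M F').Reachable u v := by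
  intro n
  induction n using Nat.strong_induction_on with
  | _ n ih =>
    intro F F' hF hF' hcard u v hr
    by_cases heq : F = F'
    · rwa [heq] at hr
    · have hne : (F ∆ F').Nonempty := by
        rw [Finset.nonempty_iff_ne_empty]
        intro h0
        exact heq (symmDiff_eq_bot.1 (by rw [Finset.bot_eq_empty]; exact h0))
      obtain ⟨e, he⟩ := hne
      obtain ⟨f, hf, hfe, hH⟩ := exchange' M hM hF hF' he
      have hstep : (SG M (F ∆ {e, f})).Reachable u v :=
        reach_flip hM hF (Ne.symm hfe) hH hr
      have hsub : ({e, f} : Finset α) ⊆ F ∆ F' := by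
        intro z hz
        simp only [Finset.mem_insert, Finset.mem_singleton] at hz
        rcases hz with rfl | rfl <;> assumption
      have hdd : (F ∆ {e, f}) ∆ F' = (F ∆ F') \ {e, f} := by
        rw [symmDiff_assoc, symmDiff_comm ({e, f} : Finset α) F', ← symmDiff_assoc,
          sd_of_subset hsub]
      have hc1 : 1 ≤ (F ∆ F').card := Finset.card_pos.2 ⟨e, he⟩
      have hcp : ({e, f} : Finset α).card = 2 := Finset.card_pair (Ne.symm hfe)
      have hc2 : ((F ∆ {e, f}) ∆ F').card ≤ n - 1 := by
        rw [hdd, Finset.card_sdiff_of_subset hsub, hcp]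
        omega
      exact ih (n - 1) (by omega) _ _ hH hF' hc2 u v hstep

end DM6
namespace DM6

open Finset SimpleGraph

variable {α : Type*} [DecidableEq α]

/-- A walk between two distinct vertices in some fundamental graph yields two
bases differing exactly by that pair. -/
lemma walk_R (M : DeltaMatroid α) (hM : M.IsEven) {x y : α} (hxy : x ≠ y) :
    ∀ n (F : Finset α), F ∈ M.B → ∀ W : (SG M F).Walk y x, W.length ≤ n → Rel M x y := by
  intro n
  induction n using Nat.strong_induction_on with
  | _ n ih =>
    intro F hF W hlen
    obtain ⟨p, hp, hlp⟩ : ∃ p : (SG M F).Walk y x, p.IsPath ∧ p.length ≤ n :=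
      ⟨W.bypass, W.bypass_isPath, le_trans W.length_bypass_le hlen⟩
    cases p with
    | nil => exact absurd rfl hxy
    | @cons _ v₁ _ hadj q =>
      cases q with
      | nil => exact rel_of_adj hF hadj.symm
      | @cons _ v₂ _ hadj2 q₂ =>
        have hyv₁ : y ≠ v₁ := hadj.1
        have hFyv₁ : F ∆ {y, v₁} ∈ M.B := hadj.2
        have hv₁v₂ : v₁ ≠ v₂ := hadj2.1
        have hFv₁v₂ : F ∆ {v₁, v₂} ∈ M.B := hadj2.2
        rw [SimpleGraph.Walk.isPath_def, SimpleGraph.Walk.support_cons,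
          SimpleGraph.Walk.support_cons] at hp
        obtain ⟨hy1, hp2⟩ := List.nodup_cons.1 hp
        obtain ⟨hv1, -⟩ := List.nodup_cons.1 hp2
        have hyq : y ∉ q₂.support := fun h => hy1 (List.mem_cons_of_mem _ h)
        have hyv₂ : y ≠ v₂ := fun h => hyq (h ▸ q₂.start_mem_support)
        have hF₂ : F ∆ {v₁, y} ∈ M.B := by rwa [Finset.pair_comm] at hFyv₁
        have hedge : (SG M (F ∆ {v₁, y})).Adj v₂ y := by
          refine ⟨Ne.symm hyv₂, ?_⟩
          have e1 : ({v₁, y} : Finset α) ∆ {v₂, y} = {v₁, v₂} := by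
            rw [Finset.pair_comm v₁ y, Finset.pair_comm v₂ y]
            exact sd_pair_pair hyv₁ hyv₂ hv₁v₂
          rw [sd_flip_eq e1]; exact hFv₁v₂
        have hsupcond : ∀ s ∈ q₂.reverse.support, s ≠ v₁ ∧ s ≠ y := by
          intro s hs
          rw [SimpleGraph.Walk.support_reverse, List.mem_reverse] at hs
          exact ⟨fun h => hv1 (h ▸ hs), fun h => hyq (h ▸ hs)⟩
        have hlen2 : q₂.length + 2 ≤ n := by
          simp only [SimpleGraph.Walk.length_cons] at hlp
          omega
        rcases transfer_walk hM hF (Ne.symm hyv₁) hF₂ q₂.reverse hsupcond with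
          ⟨W', hW'⟩ | ⟨W', hW'⟩
        · refine ih (q₂.length + 1) (by omega) _ hF₂ (W'.concat hedge).reverse ?_
          rw [SimpleGraph.Walk.length_reverse, SimpleGraph.Walk.length_concat]
          rw [SimpleGraph.Walk.length_reverse] at hW'
          omega
        · refine ih (q₂.length + 1) (by omega) _ hF₂ W'.reverse ?_
          rw [SimpleGraph.Walk.length_reverse]
          rw [SimpleGraph.Walk.length_reverse] at hW'
          omega

/-- Transitivity of the pair relation. -/
lemma rel_trans {M : DeltaMatroid α} (hM : M.IsEven) {a b c : α}
    (h1 : Rel M a b) (h2 : Rel M b c) (hac : a ≠ c) : Rel M a c := by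
  obtain ⟨hab, B₁, hB₁, B₂, hB₂, hp⟩ := h1
  obtain ⟨hbc, D₁, hD₁, D₂, hD₂, hq⟩ := h2
  have adj1 : (SG M B₁).Adj a b :=
    ⟨hab, by rw [← hp, symmDiff_symmDiff_cancel_left]; exact hB₂⟩
  have adj2 : (SG M D₁).Adj b c :=
    ⟨hbc, by rw [← hq, symmDiff_symmDiff_cancel_left]; exact hD₂⟩
  have r1 : (SG M D₁).Reachable a b :=
    reach_any hM (B₁ ∆ D₁).card B₁ D₁ hB₁ hD₁ le_rfl a b adj1.reachable
  obtain ⟨W⟩ := (r1.trans adj2.reachable).symm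
  exact walk_R M hM hac W.length D₁ hD₁ W le_rfl

/-! ### Separators -/

lemma mix_eq {B₁ B₂ S : Finset α} (h : (B₁ ∆ B₂) ∩ S = ∅) :
    (B₁ ∩ S) ∪ (B₂ \ S) = B₂ := by
  ext a
  have ha : ¬(a ∈ B₁ ∆ B₂ ∧ a ∈ S) := by
    intro hc
    exact (Finset.eq_empty_iff_forall_notMem.1 h a) (Finset.mem_inter.2 hc)
  rw [Finset.mem_symmDiff] at ha
  simp only [Finset.mem_union, Finset.mem_inter, Finset.mem_sdiff]
  by_cases haS : a ∈ S <;> tauto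

noncomputable instance instDecRel (M : DeltaMatroid α) (x : α) :
    DecidablePred (fun u => u = x ∨ Rel M u x) := Classical.decPred _

noncomputable def comp (M : DeltaMatroid α) (x : α) : Finset α :=
  M.E.filter (fun u => u = x ∨ Rel M u x)

lemma mem_comp {M : DeltaMatroid α} {x u : α} :
    u ∈ comp M x ↔ u ∈ M.E ∧ (u = x ∨ Rel M u x) := Finset.mem_filter

lemma comp_sep (M : DeltaMatroid α) (hM : M.IsEven) (x : α) :
    M.IsSeparator (comp M x) := by
  refine ⟨Finset.filter_subset _ _, ?_⟩
  intro B₁ hB₁ B₂ hB₂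
  have aux : ∀ n (B₂' : Finset α), B₂' ∈ M.B → ((B₁ ∆ B₂') ∩ comp M x).card ≤ n →
      (B₁ ∩ comp M x) ∪ (B₂' \ comp M x) ∈ M.B := by
    intro n
    induction n with
    | zero =>
      intro B₂' h hc
      rw [mix_eq (Finset.card_eq_zero.1 (Nat.le_zero.1 hc))]
      exact h
    | succ n ihn =>
      intro B₂' hB₂' hc
      by_cases h0 : (B₁ ∆ B₂') ∩ comp M x = ∅
      · rw [mix_eq h0]; exact hB₂'
      · obtain ⟨e, he⟩ := Finset.nonempty_iff_ne_empty.2 h0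
        rw [Finset.mem_inter] at he
        obtain ⟨heD, heS⟩ := he
        have heD' : e ∈ B₂' ∆ B₁ := by rwa [symmDiff_comm]
        obtain ⟨f, hf, hfe, hB₂''⟩ := exchange' M hM hB₂' hB₁ heD'
        have hfD : f ∈ B₁ ∆ B₂' := by rwa [symmDiff_comm] at hf
        have href : Rel M e f := rel_of_mem hB₂' hB₂'' (Ne.symm hfe)
        have hfE : f ∈ M.E := by
          rcases Finset.mem_symmDiff.1 hfD with ⟨hz, -⟩ | ⟨h, -⟩
          · exact M.subset_ground _ hB₁ hz
          · exact M.subset_ground _ hB₂' h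
        have hfS : f ∈ comp M x := by
          rcases (mem_comp.1 heS).2 with hex | hex
          · exact mem_comp.2 ⟨hfE, Or.inr (hex ▸ href.symm)⟩
          · by_cases hfx : f = x
            · exact mem_comp.2 ⟨hfE, Or.inl hfx⟩
            · exact mem_comp.2 ⟨hfE, Or.inr (rel_trans hM href.symm hex hfx)⟩
        have hset1 : (B₂' ∆ {e, f}) \ comp M x = B₂' \ comp M x := by
          ext a
          by_cases hae : a = e
          · rw [hae]; simp [Finset.mem_sdiff, heS]
          · by_cases haf : a = f
            · rw [haf]; simp [Finset.mem_sdiff, hfS]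
            · have hmm : a ∈ B₂' ∆ {e, f} ↔ a ∈ B₂' := by
                rw [Finset.mem_symmDiff]
                simp [hae, haf]
              simp only [Finset.mem_sdiff, hmm]
        have hefsub : ({e, f} : Finset α) ⊆ B₁ ∆ B₂' := by
          intro z hz
          simp only [Finset.mem_insert, Finset.mem_singleton] at hz
          rcases hz with rfl | rfl
          exacts [heD, hfD]
        have hset2 : (B₁ ∆ (B₂' ∆ {e, f})) ∩ comp M x ⊆
            ((B₁ ∆ B₂') ∩ comp M x).erase e := by
          intro a ha
          rw [Finset.mem_inter] at ha
          have haD : a ∈ (B₁ ∆ B₂') ∆ {e, f} := by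
            rw [symmDiff_assoc]; exact ha.1
          rw [sd_of_subset hefsub, Finset.mem_sdiff] at haD
          obtain ⟨haD', hanot⟩ := haD
          simp only [Finset.mem_insert, Finset.mem_singleton, not_or] at hanot
          exact Finset.mem_erase.2 ⟨hanot.1, Finset.mem_inter.2 ⟨haD', ha.2⟩⟩
        have hcard2 : ((B₁ ∆ (B₂' ∆ {e, f})) ∩ comp M x).card ≤ n := by
          have h1 := Finset.card_le_card hset2
          have h2 := Finset.card_erase_of_mem (Finset.mem_inter.2 ⟨heD, heS⟩)
          omega
        have hres := ihn (B₂' ∆ {e, f}) hB₂'' hcard2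
        rwa [hset1] at hres
  exact aux ((B₁ ∆ B₂) ∩ comp M x).card B₂ hB₂ le_rfl

lemma sep_cross (M : DeltaMatroid α) (hM : M.IsEven) {X : Finset α}
    (hX : M.IsSeparator X) {B₁ B₂ : Finset α} (hB₁ : B₁ ∈ M.B) (hB₂ : B₂ ∈ M.B)
    {e f : α} (hef : e ≠ f) (hd : B₁ ∆ B₂ = {e, f}) (heX : e ∈ X) : f ∈ X := by
  by_contra hfX
  have hD : (B₁ ∩ X) ∪ (B₂ \ X) ∈ M.B := hX.2 B₁ hB₁ B₂ hB₂
  have hident : ((B₁ ∩ X) ∪ (B₂ \ X)) ∆ B₂ = (B₁ ∆ B₂) ∩ X := by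
    ext a
    by_cases haX : a ∈ X <;>
      simp only [Finset.mem_symmDiff, Finset.mem_union, Finset.mem_inter,
        Finset.mem_sdiff, haX] <;> tauto
  rw [hd] at hident
  have hsing : ({e, f} : Finset α) ∩ X = {e} := by
    ext a
    simp only [Finset.mem_inter, Finset.mem_insert, Finset.mem_singleton]
    constructor
    · rintro ⟨rfl | rfl, haX⟩
      · rfl
      · exact absurd haX hfX
    · rintro rfl
      exact ⟨Or.inl rfl, heX⟩
  rw [hsing] at hident
  have hpar := sd_card_parity ((B₁ ∩ X) ∪ (B₂ \ X)) B₂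
  rw [hident] at hpar
  have heq := hM _ hD _ hB₂
  simp only [Finset.card_singleton] at hpar
  omega

lemma sep_inter {M : DeltaMatroid α} {X Y : Finset α}
    (hX : M.IsSeparator X) (hY : M.IsSeparator Y) : M.IsSeparator (X ∩ Y) := by
  refine ⟨Finset.inter_subset_left.trans hX.1, ?_⟩
  intro B₁ hB₁ B₂ hB₂
  have hA := hY.2 B₁ hB₁ B₂ hB₂
  have h2 := hX.2 _ hA B₂ hB₂
  have hset : (((B₁ ∩ Y) ∪ (B₂ \ Y)) ∩ X) ∪ (B₂ \ X) =
      (B₁ ∩ (X ∩ Y)) ∪ (B₂ \ (X ∩ Y)) := by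
    ext a
    simp only [Finset.mem_union, Finset.mem_inter, Finset.mem_sdiff]
    tauto
  rwa [hset] at h2

end DM6
/-- In an even delta-matroid, distinct ground-set elements `x` and `y` lie in a
common component iff some two bases have symmetric difference `{x, y}`. -/
theorem statement6 (M : DeltaMatroid α) (hM : M.IsEven) (x y : α)
    (hx : x ∈ M.E) (hy : y ∈ M.E) (hxy : x ≠ y) :
    (∃ C, M.IsComponent C ∧ x ∈ C ∧ y ∈ C) ↔
      (∃ B₁ ∈ M.B, ∃ B₂ ∈ M.B, B₁ ∆ B₂ = ({x, y} : Finset α)) := by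
  constructor
  · rintro ⟨C, hC, hxC, hyC⟩
    have hSsep := DM6.comp_sep M hM x
    have hCS := DM6.sep_inter hC.1 hSsep
    have hxS : x ∈ DM6.comp M x := DM6.mem_comp.2 ⟨hx, Or.inl rfl⟩
    have hne : (C ∩ DM6.comp M x).Nonempty := ⟨x, Finset.mem_inter.2 ⟨hxC, hxS⟩⟩
    have heqC := hC.2.2 _ hCS hne Finset.inter_subset_left
    have hyS : y ∈ DM6.comp M x := by
      have hyCS : y ∈ C ∩ DM6.comp M x := by rw [heqC]; exact hyC
      exact (Finset.mem_inter.1 hyCS).2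
    rcases (DM6.mem_comp.1 hyS).2 with hyx | hrel
    · exact absurd hyx.symm hxy
    · obtain ⟨hyx, B₁, h₁, B₂, h₂, hd⟩ := hrel
      exact ⟨B₁, h₁, B₂, h₂, by rw [hd, Finset.pair_comm]⟩
  · rintro ⟨B₁, hB₁, B₂, hB₂, hd⟩
    have hrelyx : DM6.Rel M y x :=
      ⟨hxy.symm, B₁, hB₁, B₂, hB₂, by rw [hd, Finset.pair_comm]⟩
    have hxS : x ∈ DM6.comp M x := DM6.mem_comp.2 ⟨hx, Or.inl rfl⟩
    have hyS : y ∈ DM6.comp M x := DM6.mem_comp.2 ⟨hy, Or.inr hrelyx⟩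
    refine ⟨DM6.comp M x, ⟨DM6.comp_sep M hM x, ⟨x, hxS⟩, ?_⟩, hxS, hyS⟩
    intro X hXsep hXne hXsub
    obtain ⟨u, hu⟩ := hXne
    have hxX : x ∈ X := by
      rcases (DM6.mem_comp.1 (hXsub hu)).2 with hux | hrel
      · rwa [← hux]
      · obtain ⟨hux, D₁, h₁, D₂, h₂, hd'⟩ := hrel
        exact DM6.sep_cross M hM hXsep h₁ h₂ hux hd' hu
    refine Finset.Subset.antisymm hXsub ?_
    intro v hvS
    rcases (DM6.mem_comp.1 hvS).2 with hvx | hrel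
    · rwa [hvx]
    · obtain ⟨hvx, D₁, h₁, D₂, h₂, hd'⟩ := hrel
      exact DM6.sep_cross M hM hXsep h₁ h₂ (Ne.symm hvx)
        (by rw [hd', Finset.pair_comm]) hxX
end

section
/- For an even delta-matroid M = (E, B), a subset X ⊆ E is a separator of M if and only if |X ∩ B| has the same parity for every base B ∈ B. -/
open scoped symmDiff

variable {α : Type*} [DecidableEq α]

lemma card_symmDiff_mod_two (s t : Finset α) :
    (s ∆ t).card % 2 = (s.card + t.card) % 2 := by
  have h1 := Finset.card_sdiff_add_card_inter s t
  have h2 := Finset.card_sdiff_add_card_inter t s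
  have h3 : (s ∆ t).card = (s \ t).card + (t \ s).card := by
    rw [symmDiff_def]
    exact Finset.card_union_of_disjoint (Finset.sdiff_disjoint.mono_right Finset.sdiff_subset)
  have h4 : s ∩ t = t ∩ s := Finset.inter_comm s t
  rw [h4] at h1
  omega

/-- parity obstruction: flipping a single element of `X` changes the parity of `X ∩ ·`. -/
lemma parity_flip (X B D : Finset α) (e : α) (hD : X ∩ D = {e}) :
    (X ∩ (B ∆ D)).card % 2 ≠ (X ∩ B).card % 2 := by
  have h : X ∩ (B ∆ D) = (X ∩ B) ∆ (X ∩ D) := inf_symmDiff_distrib_left X B D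
  rw [h, hD]
  have := card_symmDiff_mod_two (X ∩ B) ({e} : Finset α)
  simp only [Finset.card_singleton] at this
  omega

-- the key lemma: parity condition implies the recombination is a base
lemma key_lemma (M : DeltaMatroid α) (X : Finset α)
    (hpar : ∀ B₁ ∈ M.B, ∀ B₂ ∈ M.B, (X ∩ B₁).card % 2 = (X ∩ B₂).card % 2) :
    ∀ n (B₁ B₂ : Finset α), B₁ ∈ M.B → B₂ ∈ M.B → ((B₁ ∆ B₂) ∩ X).card = n →
      B₂ ∆ ((B₁ ∆ B₂) ∩ X) ∈ M.B := by
  intro n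
  induction n using Nat.strong_induction_on with
  | _ n ih =>
    intro B₁ B₂ h₁ h₂ hcard
    rcases Nat.eq_zero_or_pos n with h0 | hpos
    · subst h0
      rw [Finset.card_eq_zero] at hcard
      rw [hcard, ← Finset.bot_eq_empty, symmDiff_bot]
      exact h₂
    · have hne : ((B₁ ∆ B₂) ∩ X).Nonempty := Finset.card_pos.mp (hcard ▸ hpos)
      obtain ⟨e, he⟩ := hne
      have heD : e ∈ B₁ ∆ B₂ := (Finset.mem_inter.mp he).1
      have heX : e ∈ X := (Finset.mem_inter.mp he).2
      have heD' : e ∈ B₂ ∆ B₁ := by rwa [symmDiff_comm]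
      obtain ⟨f, hf, hB'⟩ := M.exchange B₂ h₂ B₁ h₁ e heD'
      have hfD : f ∈ B₁ ∆ B₂ := by rwa [symmDiff_comm] at hf
      -- f ≠ e
      have hfe : f ≠ e := by
        rintro rfl
        have h2s : ({f, f} : Finset α) = ({f} : Finset α) := by simp
        rw [h2s] at hB'
        have hXD : X ∩ ({f} : Finset α) = {f} := by
          rw [Finset.inter_eq_right]; simpa using heX
        exact parity_flip X B₂ {f} f hXD (hpar _ hB' _ h₂)
      -- f ∈ X
      have hfX : f ∈ X := by
        by_contra hfX
        have hXD : X ∩ ({e, f} : Finset α) = {e} := by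
          ext x
          simp only [Finset.mem_inter, Finset.mem_insert, Finset.mem_singleton]
          constructor
          · rintro ⟨hx, rfl | rfl⟩
            · rfl
            · exact absurd hx hfX
          · rintro rfl; exact ⟨heX, Or.inl rfl⟩
        exact parity_flip X B₂ {e, f} e hXD (hpar _ hB' _ h₂)
      have hpair : ({e, f} : Finset α) ⊆ (B₁ ∆ B₂) ∩ X := by
        intro x hx
        rcases Finset.mem_insert.mp hx with rfl | hx
        · exact he
        · rw [Finset.mem_singleton] at hx; subst hx
          exact Finset.mem_inter.mpr ⟨hfD, hfX⟩
      have hpairD : ({e, f} : Finset α) ⊆ B₁ ∆ B₂ :=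
        hpair.trans Finset.inter_subset_left
      set B₂' := B₂ ∆ ({e, f} : Finset α) with hB₂'def
      -- new symmetric difference
      have hsd : B₁ ∆ B₂' = (B₁ ∆ B₂) \ ({e, f} : Finset α) := by
        rw [hB₂'def, ← symmDiff_assoc]
        exact symmDiff_of_ge (Finset.le_iff_subset.mpr hpairD)
      have hsdX : (B₁ ∆ B₂') ∩ X = ((B₁ ∆ B₂) ∩ X) \ ({e, f} : Finset α) := by
        rw [hsd]
        ext x
        simp only [Finset.mem_inter, Finset.mem_sdiff]
        tauto
      have hcard2 : (({e, f} : Finset α)).card = 2 := by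
        rw [Finset.card_insert_of_notMem (by simpa using (Ne.symm hfe))]
        simp
      have hcard' : ((B₁ ∆ B₂') ∩ X).card = n - 2 := by
        rw [hsdX, Finset.card_sdiff_of_subset hpair, hcard, hcard2]
      have hn2 : 2 ≤ n := by
        have := Finset.card_le_card hpair
        rw [hcard, hcard2] at this
        exact this
      have hrec := ih (n - 2) (by omega) B₁ B₂' h₁ hB' hcard'
      -- identify the targets
      have hid : B₂' ∆ ((B₁ ∆ B₂') ∩ X) = B₂ ∆ ((B₁ ∆ B₂) ∩ X) := by
        rw [hsdX, hB₂'def]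
        have h1 : ((B₁ ∆ B₂) ∩ X) \ ({e, f} : Finset α)
            = ({e, f} : Finset α) ∆ ((B₁ ∆ B₂) ∩ X) := by
          rw [symmDiff_comm ({e, f} : Finset α) ((B₁ ∆ B₂) ∩ X)]
          exact (symmDiff_of_ge (Finset.le_iff_subset.mpr hpair)).symm
        rw [h1, symmDiff_assoc, symmDiff_symmDiff_cancel_left]
      rwa [hid] at hrec

/-- For an even delta-matroid, `X ⊆ E` is a separator iff `|X ∩ B|` has the same
parity for every base `B`. -/
theorem statement7 (M : DeltaMatroid α) (hM : M.IsEven) (X : Finset α)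
    (hX : X ⊆ M.E) :
    M.IsSeparator X ↔
      ∀ B₁ ∈ M.B, ∀ B₂ ∈ M.B, (X ∩ B₁).card % 2 = (X ∩ B₂).card % 2 := by
  constructor
  · rintro ⟨-, hsep⟩ B₁ h₁ B₂ h₂
    have h₃ := hsep B₁ h₁ B₂ h₂
    have hdis : Disjoint (B₁ ∩ X) (B₂ \ X) := by
      simp only [Finset.disjoint_left, Finset.mem_inter, Finset.mem_sdiff]
      rintro a ⟨-, haX⟩ ⟨-, h⟩
      exact h haX
    have hcard : ((B₁ ∩ X) ∪ (B₂ \ X)).card = (B₁ ∩ X).card + (B₂ \ X).card :=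
      Finset.card_union_of_disjoint hdis
    have hpar := hM _ h₃ _ h₂
    have hb2 : (B₂ ∩ X).card + (B₂ \ X).card = B₂.card :=
      Finset.card_inter_add_card_sdiff B₂ X
    have e1 : X ∩ B₁ = B₁ ∩ X := Finset.inter_comm X B₁
    have e2 : X ∩ B₂ = B₂ ∩ X := Finset.inter_comm X B₂
    rw [e1, e2]
    omega
  · intro hpar
    refine ⟨hX, fun B₁ h₁ B₂ h₂ => ?_⟩
    have hk := key_lemma M X hpar ((B₁ ∆ B₂) ∩ X).card B₁ B₂ h₁ h₂ rfl
    have hid : B₂ ∆ ((B₁ ∆ B₂) ∩ X) = (B₁ ∩ X) ∪ (B₂ \ X) := by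
      ext x
      simp only [Finset.mem_symmDiff, Finset.mem_inter, Finset.mem_union, Finset.mem_sdiff]
      tauto
    rwa [hid] at hk
end

section
/- Let M be an even delta-matroid in which every component has size at most two. Then the basis graph BG(M) is isomorphic to the hypercube graph Q_d, where d is the number of 2-element components of M. -/
open scoped symmDiff

variable {α : Type*} [DecidableEq α]

namespace DMaux

variable (M : DeltaMatroid α)

lemma sep_ground : M.IsSeparator M.E := by
  refine ⟨subset_rfl, fun B₁ h₁ B₂ h₂ => ?_⟩
  have : (B₁ ∩ M.E) ∪ (B₂ \ M.E) = B₁ := by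
    rw [Finset.inter_eq_left.mpr (M.subset_ground _ h₁),
      Finset.sdiff_eq_empty_iff_subset.mpr (M.subset_ground _ h₂), Finset.union_empty]
  rwa [this]

variable {M}

lemma sep_inter {X Y : Finset α} (hX : M.IsSeparator X) (hY : M.IsSeparator Y) :
    M.IsSeparator (X ∩ Y) := by
  refine ⟨(Finset.inter_subset_left).trans hX.1, fun B₁ h₁ B₂ h₂ => ?_⟩
  have h₃ := hX.2 B₁ h₁ B₂ h₂
  have h₄ := hY.2 _ h₃ B₂ h₂
  have : (((B₁ ∩ X) ∪ (B₂ \ X)) ∩ Y) ∪ (B₂ \ Y) = (B₁ ∩ (X ∩ Y)) ∪ (B₂ \ (X ∩ Y)) := by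
    ext a
    simp only [Finset.mem_union, Finset.mem_inter, Finset.mem_sdiff]
    tauto
  rwa [this] at h₄

lemma sep_compl {X : Finset α} (hX : M.IsSeparator X) : M.IsSeparator (M.E \ X) := by
  refine ⟨Finset.sdiff_subset, fun B₁ h₁ B₂ h₂ => ?_⟩
  have h₃ := hX.2 B₂ h₂ B₁ h₁
  have e₁ := M.subset_ground B₁ h₁
  have e₂ := M.subset_ground B₂ h₂
  have : (B₂ ∩ X) ∪ (B₁ \ X) = (B₁ ∩ (M.E \ X)) ∪ (B₂ \ (M.E \ X)) := by
    ext a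
    have ha₁ := @e₁ a
    have ha₂ := @e₂ a
    simp only [Finset.mem_union, Finset.mem_inter, Finset.mem_sdiff]
    tauto
  rwa [this] at h₃

lemma sep_diff {X Y : Finset α} (hX : M.IsSeparator X) (hY : M.IsSeparator Y) :
    M.IsSeparator (X \ Y) := by
  have h := sep_inter hX (sep_compl hY)
  have : X ∩ (M.E \ Y) = X \ Y := by
    ext a
    have hax : a ∈ X → a ∈ M.E := fun h => hX.1 h
    simp only [Finset.mem_inter, Finset.mem_sdiff]
    tauto
  rwa [this] at h

lemma trace_parity (hM : M.IsEven) {X : Finset α} (hX : M.IsSeparator X)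
    {B₁ B₂ : Finset α} (h₁ : B₁ ∈ M.B) (h₂ : B₂ ∈ M.B) :
    (B₁ ∩ X).card % 2 = (B₂ ∩ X).card % 2 := by
  have h₃ := hX.2 B₁ h₁ B₂ h₂
  have hd : Disjoint (B₁ ∩ X) (B₂ \ X) := by
    apply Finset.disjoint_left.mpr
    intro a ha hb
    exact (Finset.mem_sdiff.mp hb).2 (Finset.mem_inter.mp ha).2
  have hc : ((B₁ ∩ X) ∪ (B₂ \ X)).card = (B₁ ∩ X).card + (B₂ \ X).card :=
    Finset.card_union_of_disjoint hd
  have hc₂ : B₂.card = (B₂ ∩ X).card + (B₂ \ X).card := by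
    rw [Finset.card_inter_add_card_sdiff]
  have := hM _ h₃ _ h₂
  rw [hc, hc₂] at this
  omega

lemma pair_subsets {C s t : Finset α} (hC : C.card = 2) (hs : s ⊆ C) (ht : t ⊆ C)
    (hp : s.card % 2 = t.card % 2) : t = s ∨ t = C \ s := by
  have hsc : s.card ≤ 2 := hC ▸ Finset.card_le_card hs
  have htc : t.card ≤ 2 := hC ▸ Finset.card_le_card ht
  rcases Nat.even_or_odd s.card with he | ho
  · rw [Nat.even_iff] at he
    have hte : t.card % 2 = 0 := by omega
    have hse : s.card = 0 ∨ s.card = 2 := by omega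
    have hte' : t.card = 0 ∨ t.card = 2 := by omega
    rcases hse with h0 | h2
    · have hs' : s = ∅ := Finset.card_eq_zero.mp h0
      rcases hte' with t0 | t2
      · exact Or.inl (by rw [hs', Finset.card_eq_zero.mp t0])
      · refine Or.inr ?_
        rw [hs', Finset.sdiff_empty]
        exact Finset.eq_of_subset_of_card_le ht (by omega)
    · have hs' : s = C := Finset.eq_of_subset_of_card_le hs (by omega)
      rcases hte' with t0 | t2
      · refine Or.inr ?_
        rw [hs', Finset.sdiff_self]
        exact Finset.card_eq_zero.mp t0
      · exact Or.inl ((Finset.eq_of_subset_of_card_le ht (by omega)).trans hs'.symm)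
  · rw [Nat.odd_iff] at ho
    have hs1 : s.card = 1 := by omega
    have ht1 : t.card = 1 := by omega
    obtain ⟨x, hx⟩ := Finset.card_eq_one.mp hs1
    obtain ⟨y, hy⟩ := Finset.card_eq_one.mp ht1
    subst hx hy
    by_cases hxy : y = x
    · exact Or.inl (by rw [hxy])
    · refine Or.inr ?_
      have hysd : ({y} : Finset α) ⊆ C \ {x} := by
        simp only [Finset.singleton_subset_iff, Finset.mem_sdiff, Finset.mem_singleton]
        exact ⟨ht (by simp), hxy⟩
      have hcard : (C \ {x}).card = 1 := by
        rw [Finset.card_sdiff_of_subset (by simpa using hs (Finset.mem_singleton_self x))]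
        simp [hC]
      exact Finset.eq_of_subset_of_card_le hysd (by omega)


lemma exists_comp {e : α} (he : e ∈ M.E) : ∃ C, M.IsComponent C ∧ e ∈ C := by
  classical
  set S := M.E.powerset.filter (fun X => M.IsSeparator X ∧ e ∈ X) with hS
  have hES : M.E ∈ S := by
    simp only [hS, Finset.mem_filter, Finset.mem_powerset]
    exact ⟨subset_rfl, sep_ground M, he⟩
  obtain ⟨C, hCS, hmin⟩ := Finset.exists_min_image S Finset.card ⟨_, hES⟩
  simp only [hS, Finset.mem_filter, Finset.mem_powerset] at hCS
  obtain ⟨hCE, hCsep, heC⟩ := hCS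
  refine ⟨C, ⟨hCsep, ⟨e, heC⟩, ?_⟩, heC⟩
  intro X hXs hXne hXC
  by_cases heX : e ∈ X
  · have hXS : X ∈ S := by
      simp only [hS, Finset.mem_filter, Finset.mem_powerset]
      exact ⟨hXC.trans hCE, hXs, heX⟩
    exact Finset.eq_of_subset_of_card_le hXC (hmin X hXS)
  · exfalso
    have hD : M.IsSeparator (C \ X) := sep_diff hCsep hXs
    have hDS : C \ X ∈ S := by
      simp only [hS, Finset.mem_filter, Finset.mem_powerset]
      exact ⟨(Finset.sdiff_subset).trans hCE, hD, Finset.mem_sdiff.mpr ⟨heC, heX⟩⟩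
    have h1 := hmin _ hDS
    have h2 : (C \ X).card = C.card - X.card := Finset.card_sdiff_of_subset hXC
    have h3 : X.card ≤ C.card := Finset.card_le_card hXC
    have h4 : 1 ≤ X.card := Finset.card_pos.mpr hXne
    omega

lemma comp_eq_or_disjoint {C D : Finset α} (hC : M.IsComponent C) (hD : M.IsComponent D) :
    C = D ∨ Disjoint C D := by
  by_cases h : (C ∩ D).Nonempty
  · left
    have hsep := sep_inter hC.1 hD.1
    have h1 := hC.2.2 _ hsep h Finset.inter_subset_left
    have h2 := hD.2.2 _ hsep h Finset.inter_subset_right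
    exact h1.symm.trans h2
  · right
    rw [Finset.not_nonempty_iff_eq_empty] at h
    exact Finset.disjoint_iff_inter_eq_empty.mpr h

lemma trace_pair (hM : M.IsEven) {C : Finset α} (hC : M.IsComponent C) (hC2 : C.card = 2)
    {B₁ B₂ : Finset α} (h₁ : B₁ ∈ M.B) (h₂ : B₂ ∈ M.B) :
    B₂ ∩ C = B₁ ∩ C ∨ B₂ ∩ C = C \ (B₁ ∩ C) :=
  pair_subsets hC2 Finset.inter_subset_right Finset.inter_subset_right
    (trace_parity hM hC.1 h₁ h₂)

/-- L1: a 2-element component is contained in or disjoint from any `B₁ ∆ B₂`. -/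
lemma comp_sub_or_disjoint (hM : M.IsEven) {C : Finset α} (hC : M.IsComponent C)
    (hC2 : C.card = 2) {B₁ B₂ : Finset α} (h₁ : B₁ ∈ M.B) (h₂ : B₂ ∈ M.B) :
    C ⊆ B₁ ∆ B₂ ∨ Disjoint C (B₁ ∆ B₂) := by
  rcases trace_pair hM hC hC2 h₁ h₂ with h | h
  · right
    rw [Finset.disjoint_left]
    intro a haC ha
    have := Finset.ext_iff.mp h a
    rw [Finset.mem_symmDiff] at ha
    simp only [Finset.mem_inter] at this
    tauto
  · left
    intro a haC
    have := Finset.ext_iff.mp h a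
    simp only [Finset.mem_inter, Finset.mem_sdiff] at this
    rw [Finset.mem_symmDiff]
    tauto

/-- L3: flipping a 2-element component of a base gives a base. -/
lemma flip_comp (hM : M.IsEven) {C : Finset α} (hC : M.IsComponent C) (hC2 : C.card = 2)
    {B : Finset α} (hB : B ∈ M.B) : B ∆ C ∈ M.B := by
  have hex : ∃ B'' ∈ M.B, B'' ∩ C = C \ (B ∩ C) := by
    by_contra hcon
    push_neg at hcon
    have htr : ∀ B'' ∈ M.B, B'' ∩ C = B ∩ C := by
      intro B'' hB''
      rcases trace_pair hM hC hC2 hB hB'' with h | h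
      · exact h
      · exact absurd h (hcon B'' hB'')
    obtain ⟨e, heC⟩ := hC.2.1
    have hsep : M.IsSeparator {e} := by
      refine ⟨Finset.singleton_subset_iff.mpr (hC.1.1 heC), fun B₁ h₁ B₂ h₂ => ?_⟩
      have t₁ := htr B₁ h₁
      have t₂ := htr B₂ h₂
      have hmem : ∀ a, a ∈ B₁ ∩ ({e} : Finset α) ↔ a ∈ B₂ ∩ ({e} : Finset α) := by
        intro a
        simp only [Finset.mem_inter, Finset.mem_singleton]
        constructor
        · rintro ⟨ha, rfl⟩
          have := Finset.ext_iff.mp (t₁.trans t₂.symm) a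
          simp only [Finset.mem_inter] at this
          exact ⟨(this.mp ⟨ha, heC⟩).1, rfl⟩
        · rintro ⟨ha, rfl⟩
          have := Finset.ext_iff.mp (t₂.trans t₁.symm) a
          simp only [Finset.mem_inter] at this
          exact ⟨(this.mp ⟨ha, heC⟩).1, rfl⟩
      have : (B₁ ∩ {e}) ∪ (B₂ \ {e}) = B₂ := by
        ext a
        have := hmem a
        simp only [Finset.mem_union, Finset.mem_inter, Finset.mem_sdiff,
          Finset.mem_singleton] at *
        by_cases hae : a = e <;> tauto
      rw [this]
      exact h₂
    have := hC.2.2 {e} hsep ⟨e, Finset.mem_singleton_self e⟩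
      (Finset.singleton_subset_iff.mpr heC)
    rw [← this] at hC2
    simp at hC2
  obtain ⟨B'', hB''B, hB''⟩ := hex
  have h := hC.1.2 B'' hB''B B hB
  have : (B'' ∩ C) ∪ (B \ C) = B ∆ C := by
    rw [hB'']
    ext a
    simp only [Finset.mem_union, Finset.mem_sdiff, Finset.mem_inter, Finset.mem_symmDiff]
    tauto
  rwa [this] at h

/-- L2: every element of `B₁ ∆ B₂` lies in a 2-element component inside `B₁ ∆ B₂`. -/
lemma cover (hM : M.IsEven) (hsmall : ∀ C, M.IsComponent C → C.card ≤ 2)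
    {B₁ B₂ : Finset α} (h₁ : B₁ ∈ M.B) (h₂ : B₂ ∈ M.B) {e : α} (he : e ∈ B₁ ∆ B₂) :
    ∃ C, M.IsComponent C ∧ C.card = 2 ∧ e ∈ C ∧ C ⊆ B₁ ∆ B₂ := by
  have heE : e ∈ M.E := by
    rw [Finset.mem_symmDiff] at he
    rcases he with ⟨h, -⟩ | ⟨h, -⟩
    · exact M.subset_ground _ h₁ h
    · exact M.subset_ground _ h₂ h
  obtain ⟨C, hC, heC⟩ := exists_comp heE
  have hle := hsmall C hC
  have hge : 1 ≤ C.card := Finset.card_pos.mpr hC.2.1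
  have hC2 : C.card = 2 := by
    rcases Nat.lt_or_ge C.card 2 with h | h
    · exfalso
      have h1 : C.card = 1 := by omega
      obtain ⟨x, hx⟩ := Finset.card_eq_one.mp h1
      have hex : x = e := by
        rw [hx, Finset.mem_singleton] at heC
        exact heC.symm
      subst hex
      subst hx
      have hpar := trace_parity hM hC.1 h₁ h₂
      rw [Finset.mem_symmDiff] at he
      rcases he with ⟨ha, hb⟩ | ⟨ha, hb⟩
      · rw [Finset.inter_singleton_of_mem ha, Finset.inter_singleton_of_notMem hb] at hpar
        simp at hpar
      · rw [Finset.inter_singleton_of_notMem hb, Finset.inter_singleton_of_mem ha] at hpar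
        simp at hpar
    · omega
  refine ⟨C, hC, hC2, heC, ?_⟩
  rcases comp_sub_or_disjoint hM hC hC2 h₁ h₂ with h | h
  · exact h
  · exact absurd he (Finset.disjoint_left.mp h heC)

end DMaux

/-- If every component of an even delta-matroid `M` has size at most two, then
`BG(M)` is isomorphic to the hypercube `Q_d`, `d` the number of 2-element
components of `M`. -/
theorem statement10 (M : DeltaMatroid α) (hM : M.IsEven)
    (hsmall : ∀ C, M.IsComponent C → C.card ≤ 2) (d : ℕ)
    (hd : {C : Finset α | M.IsComponent C ∧ C.card = 2}.ncard = d) :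
    Nonempty (M.BG ≃g hypercube d) := by
  classical
  obtain ⟨B₀, hB₀⟩ := M.nonempty
  set P : Finset (Finset α) := M.E.powerset.filter (fun C => M.IsComponent C ∧ C.card = 2)
    with hPdef
  have hmemP : ∀ C : Finset α, C ∈ P ↔ M.IsComponent C ∧ C.card = 2 := by
    intro C
    simp only [hPdef, Finset.mem_filter, Finset.mem_powerset]
    exact ⟨fun h => h.2, fun h => ⟨h.1.1.1, h⟩⟩
  have hcard : P.card = d := by
    have hset : {C : Finset α | M.IsComponent C ∧ C.card = 2} = ↑P := by
      ext C
      simp only [Set.mem_setOf_eq, Finset.coe_sort_coe, Finset.mem_coe, hmemP]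
    rw [hset, Set.ncard_coe_finset] at hd
    exact hd
  obtain ⟨σ⟩ : Nonempty (↥P ≃ Fin d) := ⟨P.equivFinOfCardEq hcard⟩
  set g : Fin d → Finset α := fun i => ↑(σ.symm i) with hg
  have hgcomp : ∀ i, M.IsComponent (g i) ∧ (g i).card = 2 :=
    fun i => (hmemP _).mp (σ.symm i).2
  have hginj : Function.Injective g := fun i j h => σ.symm.injective (Subtype.ext h)
  have hgdisj : ∀ i j, i ≠ j → Disjoint (g i) (g j) := by
    intro i j hij
    rcases DMaux.comp_eq_or_disjoint (hgcomp i).1 (hgcomp j).1 with h | h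
    · exact absurd (hginj h) hij
    · exact h
  have hgσ : ∀ (C : Finset α) (hC : C ∈ P), g (σ ⟨C, hC⟩) = C := by
    intro C hC
    rw [hg]
    simp only [Equiv.symm_apply_apply]
  set f : ↥M.B → Fin d → Bool :=
    fun S i => decide (g i ⊆ (↑S : Finset α) ∆ B₀) with hf
  have hmem3 : ∀ (S T : Finset α) (a : α),
      a ∈ S ∆ T ↔ ((a ∈ S ∆ B₀) ↔ ¬ (a ∈ T ∆ B₀)) := by
    intro S T a
    simp only [Finset.mem_symmDiff]
    tauto
  have hdiff : ∀ (S T : ↥M.B) (i : Fin d),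
      (f S i = f T i ↔ Disjoint (g i) ((↑S : Finset α) ∆ (↑T : Finset α))) := by
    intro S T i
    rw [hf]
    simp only [decide_eq_decide]
    have hC := hgcomp i
    have hne : (g i).Nonempty := Finset.card_pos.mp (by rw [hC.2]; norm_num)
    have hSB := DMaux.comp_sub_or_disjoint hM hC.1 hC.2 S.2 hB₀
    have hTB := DMaux.comp_sub_or_disjoint hM hC.1 hC.2 T.2 hB₀
    rcases DMaux.comp_sub_or_disjoint hM hC.1 hC.2 S.2 T.2 with hsub | hdis
    · obtain ⟨e, he⟩ := hne
      have heST : e ∈ (↑S : Finset α) ∆ ↑T := hsub he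
      have hx := (hmem3 _ _ e).mp heST
      constructor
      · intro hiff
        exfalso
        rcases hSB with h | h
        · have heS : e ∈ (↑S : Finset α) ∆ B₀ := h he
          have heT : e ∉ (↑T : Finset α) ∆ B₀ := hx.mp heS
          exact heT ((hiff.mp h) he)
        · have heS : e ∉ (↑S : Finset α) ∆ B₀ := Finset.disjoint_left.mp h he
          have heT : e ∈ (↑T : Finset α) ∆ B₀ := by tauto
          rcases hTB with h' | h'
          · exact heS ((hiff.mpr h') he)
          · exact (Finset.disjoint_left.mp h' he) heT
      · intro hd'
        exact absurd heST (Finset.disjoint_left.mp hd' he)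
    · constructor
      · intro _
        exact hdis
      · intro _
        have hagree : ∀ a ∈ g i,
            ((a ∈ (↑S : Finset α) ∆ B₀) ↔ (a ∈ (↑T : Finset α) ∆ B₀)) := by
          intro a ha
          have h1 := hmem3 (↑S) (↑T) a
          have h2 : a ∉ (↑S : Finset α) ∆ ↑T := Finset.disjoint_left.mp hdis ha
          tauto
        exact ⟨fun h a ha => (hagree a ha).mp (h ha),
          fun h a ha => (hagree a ha).mpr (h ha)⟩
  have hinj : Function.Injective f := by
    intro S T h
    apply Subtype.ext
    by_contra hne
    have hne' : ((↑S : Finset α) ∆ ↑T).Nonempty := by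
      rw [Finset.nonempty_iff_ne_empty]
      intro h0
      apply hne
      rw [← Finset.bot_eq_empty] at h0
      exact symmDiff_eq_bot.mp h0
    obtain ⟨e, he⟩ := hne'
    obtain ⟨C, hCc, hC2, heC, hCsub⟩ := DMaux.cover hM hsmall S.2 T.2 he
    have hCP : C ∈ P := (hmemP C).mpr ⟨hCc, hC2⟩
    have hdis := (hdiff S T (σ ⟨C, hCP⟩)).mp (congrFun h _)
    rw [hgσ C hCP] at hdis
    exact (Finset.disjoint_left.mp hdis heC) (hCsub heC)
  have hsurj : Function.Surjective f := by
    intro s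
    have hmemB : ∀ J : Finset (Fin d), B₀ ∆ (J.sup g) ∈ M.B := by
      intro J
      induction J using Finset.induction_on with
      | empty =>
        rw [Finset.sup_empty, symmDiff_bot]
        exact hB₀
      | insert i J hiJ ih =>
        rw [Finset.sup_insert]
        have hdisj : Disjoint (g i) (J.sup g) := by
          rw [Finset.disjoint_sup_right]
          intro j hj
          exact hgdisj i j (fun hij => hiJ (hij ▸ hj))
        have heq : B₀ ∆ (g i ⊔ J.sup g) = (B₀ ∆ J.sup g) ∆ g i := by
          rw [← hdisj.symmDiff_eq_sup, symmDiff_comm (g i), ← symmDiff_assoc]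
        rw [heq]
        exact DMaux.flip_comp hM (hgcomp i).1 (hgcomp i).2 ih
    set I : Finset (Fin d) := Finset.univ.filter (fun i => s i = true) with hI
    refine ⟨⟨B₀ ∆ (I.sup g), hmemB I⟩, ?_⟩
    funext i
    rw [hf]
    have hU : (B₀ ∆ (I.sup g)) ∆ B₀ = I.sup g := by
      rw [symmDiff_comm, symmDiff_symmDiff_cancel_left]
    simp only [hU]
    by_cases hsi : s i = true
    · have hiI : i ∈ I := by
        rw [hI]
        simp [hsi]
      have hsub : g i ⊆ I.sup g := Finset.le_sup hiI
      rw [hsi]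
      exact decide_eq_true hsub
    · have hdisj : Disjoint (g i) (I.sup g) := by
        rw [Finset.disjoint_sup_right]
        intro j hj
        have hsj : s j = true := by
          rw [hI] at hj
          simpa using hj
        exact hgdisj i j (fun hij => hsi (hij ▸ hsj))
      have hnsub : ¬ g i ⊆ I.sup g := by
        intro hsub
        have hne : (g i).Nonempty := Finset.card_pos.mp (by rw [(hgcomp i).2]; norm_num)
        obtain ⟨e, he⟩ := hne
        exact (Finset.disjoint_left.mp hdisj he) (hsub he)
      have hsi' : s i = false := by
        revert hsi
        cases s i <;> simp
      rw [hsi']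
      exact decide_eq_false hnsub
  refine ⟨{ toEquiv := Equiv.ofBijective f ⟨hinj, hsurj⟩, map_rel_iff' := ?_ }⟩
  intro S T
  show (hypercube d).Adj (f S) (f T) ↔ M.BG.Adj S T
  constructor
  · rintro ⟨i, hne, hagree⟩
    have hnd : ¬ Disjoint (g i) ((↑S : Finset α) ∆ ↑T) := fun h => hne ((hdiff S T i).mpr h)
    have hsub : g i ⊆ (↑S : Finset α) ∆ ↑T :=
      (DMaux.comp_sub_or_disjoint hM (hgcomp i).1 (hgcomp i).2 S.2 T.2).resolve_right hnd
    have hsup : ((↑S : Finset α) ∆ ↑T) ⊆ g i := by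
      intro a ha
      by_contra hag
      obtain ⟨C, hCc, hC2, haC, hCsub⟩ := DMaux.cover hM hsmall S.2 T.2 ha
      have hCP : C ∈ P := (hmemP C).mpr ⟨hCc, hC2⟩
      have hji : σ ⟨C, hCP⟩ ≠ i := by
        intro h
        apply hag
        rw [← h, hgσ C hCP]
        exact haC
      have hdis := (hdiff S T (σ ⟨C, hCP⟩)).mp (hagree _ hji)
      rw [hgσ C hCP] at hdis
      exact (Finset.disjoint_left.mp hdis haC) ha
    have heq : ((↑S : Finset α) ∆ ↑T) = g i := Finset.Subset.antisymm hsup hsub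
    show ((↑S : Finset α) ∆ ↑T).card = 2
    rw [heq]
    exact (hgcomp i).2
  · intro hadj
    have hadj' : ((↑S : Finset α) ∆ ↑T).card = 2 := hadj
    have hne0 : ((↑S : Finset α) ∆ ↑T).Nonempty :=
      Finset.card_pos.mp (by rw [hadj']; norm_num)
    obtain ⟨e, he⟩ := hne0
    obtain ⟨C, hCc, hC2, heC, hCsub⟩ := DMaux.cover hM hsmall S.2 T.2 he
    have heq : C = (↑S : Finset α) ∆ ↑T :=
      Finset.eq_of_subset_of_card_le hCsub (by rw [hadj', hC2])
    have hCP : C ∈ P := (hmemP C).mpr ⟨hCc, hC2⟩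
    refine ⟨σ ⟨C, hCP⟩, ?_, ?_⟩
    · intro hfeq
      have hdis := (hdiff S T _).mp hfeq
      rw [hgσ C hCP, heq] at hdis
      exact (Finset.disjoint_left.mp hdis he) he
    · intro j hj
      apply (hdiff S T j).mpr
      have hgj : g j ≠ C := by
        intro h
        apply hj
        have h1 : σ.symm j = (⟨C, hCP⟩ : ↥P) := Subtype.ext h
        rw [← h1, Equiv.apply_symm_apply]
      rcases DMaux.comp_eq_or_disjoint (hgcomp j).1 hCc with h | h
      · exact absurd h hgj
      · rw [← heq]
        exact h
end

section
/- Let G be a graph with a Hamiltonian path starting from a vertex x, and let m ≥ 3. Then in the Cartesian product K_m □ G, every edge of the form (u, x)(v, x) with u ≠ v in K_m is pancyclic, i.e., lies in a cycle of every length k with 3 ≤ k ≤ m·|V(G)|. -/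
open scoped symmDiff

variable {α : Type*} [DecidableEq α]

namespace CEHelp

open SimpleGraph

variable {W : Type*} {G : SimpleGraph W}

def mkWalk (G : SimpleGraph W) : ∀ (a : W) (l : List W) (b : W),
    List.Chain G.Adj a (l ++ [b]) → G.Walk a b
  | a, [], b, h => SimpleGraph.Walk.cons (by simpa using (List.chain_cons.mp h).1) SimpleGraph.Walk.nil
  | a, c :: l, b, h => SimpleGraph.Walk.cons (List.chain_cons.mp h).1
      (mkWalk G c l b (List.chain_cons.mp h).2)

lemma mkWalk_support : ∀ (a : W) (l : List W) (b : W) (h : List.Chain G.Adj a (l ++ [b])),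
    (mkWalk G a l b h).support = a :: (l ++ [b])
  | a, [], b, h => by simp [mkWalk]
  | a, c :: l, b, h => by simp [mkWalk]; exact mkWalk_support c l b _

lemma mkWalk_length : ∀ (a : W) (l : List W) (b : W) (h : List.Chain G.Adj a (l ++ [b])),
    (mkWalk G a l b h).length = l.length + 1
  | a, [], b, h => by simp [mkWalk]
  | a, c :: l, b, h => by simp [mkWalk]; exact mkWalk_length c l b _

lemma mkWalk_edge_mem : ∀ (a : W) (l : List W) (b : W) (h : List.Chain G.Adj a (l ++ [b]))
    {x : W} (hx : x ∉ a :: l) (e : Sym2 W), e ∈ (mkWalk G a l b h).edges → x ∈ e →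
      e = s((a :: l).getLast (List.cons_ne_nil _ _), b)
  | a, [], b, h, x, hx, e, he, hxe => by
      simp [mkWalk] at he; simp [he]
  | a, c :: l, b, h, x, hx, e, he, hxe => by
      simp only [mkWalk, SimpleGraph.Walk.edges_cons, List.mem_cons] at he
      rcases he with he | he
      · exfalso
        subst he
        simp only [List.mem_cons, not_or] at hx
        rcases (Sym2.mem_iff.mp hxe) with rfl | rfl
        · exact hx.1 rfl
        · exact hx.2.1 rfl
      · have := mkWalk_edge_mem c l b _ (by
          simp only [List.mem_cons, not_or] at hx ⊢
          exact ⟨hx.2.1, hx.2.2⟩) e he hxe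
        rw [this, List.getLast_cons (List.cons_ne_nil _ _)]

lemma mkWalk_trail : ∀ (a : W) (l : List W) (b : W) (h : List.Chain G.Adj a (l ++ [b])),
    (a :: (l ++ [b])).Nodup → (mkWalk G a l b h).edges.Nodup
  | a, [], b, h, hnd => by simp [mkWalk]
  | a, c :: l, b, h, hnd => by
      simp only [mkWalk, SimpleGraph.Walk.edges_cons, List.nodup_cons]
      constructor
      · intro hmem
        have ha : a ∈ (mkWalk G c l b (List.chain_cons.mp h).2).support :=
          SimpleGraph.Walk.fst_mem_support_of_mem_edges _ hmem
        rw [mkWalk_support c l b (List.chain_cons.mp h).2] at ha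
        simp only [List.cons_append, List.nodup_cons] at hnd
        exact hnd.1 (by simpa using ha)
      · exact mkWalk_trail c l b _ (by
          simp only [List.cons_append, List.nodup_cons] at hnd ⊢
          exact hnd.2)

lemma chain_append_singleton {R : W → W → Prop} {b : W} :
    ∀ {a : W} {l : List W}, List.Chain R a l →
      R ((a :: l).getLast (List.cons_ne_nil _ _)) b → List.Chain R a (l ++ [b])
  | a, [], _, hr => by exact List.isChain_pair.mpr (by simpa using hr)
  | a, c :: l, h, hr => by
      rcases List.chain_cons.mp h with ⟨hac, hcl⟩
      exact List.chain_cons.mpr ⟨hac, chain_append_singleton hcl (by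
        simpa [List.getLast_cons] using hr)⟩

lemma chain_of_succ {R : W → W → Prop} (ψ : ℕ → W) {M : ℕ}
    (h : ∀ s, s + 1 ≤ M → R (ψ s) (ψ (s + 1))) :
    ∀ (len a : ℕ), a + len ≤ M → List.Chain R (ψ a) ((List.range' (a + 1) len).map ψ)
  | 0, a, _ => by exact List.isChain_singleton _
  | len + 1, a, hle => by
      rw [List.range'_succ]
      exact List.chain_cons.mpr ⟨h a (by omega),
        chain_of_succ ψ h len (a + 1) (by omega)⟩

lemma getLast_cons_map_range' (ψ : ℕ → W) (a len : ℕ) :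
    ((ψ a) :: (List.range' (a + 1) len).map ψ).getLast (List.cons_ne_nil _ _) = ψ (a + len) := by
  induction len generalizing a with
  | zero => simp
  | succ n ih =>
      rw [List.range'_succ, List.map_cons, List.getLast_cons (List.cons_ne_nil _ _)]
      have := ih (a + 1)
      rw [this]
      congr 1
      omega

lemma cycle_via_fn (H : SimpleGraph W) (ψ : ℕ → W) (k : ℕ) (hk : 3 ≤ k)
    (hinj : ∀ s₁, s₁ < k → ∀ s₂, s₂ < k → ψ s₁ = ψ s₂ → s₁ = s₂)
    (hch : ∀ s, s + 1 < k → H.Adj (ψ s) (ψ (s + 1)))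
    (hcl : H.Adj (ψ (k - 1)) (ψ 0)) :
    CycleThroughEdge H s(ψ 1, ψ 0) k := by
  have hk1 : (1 : ℕ) < k := by omega
  set rest' : List W := (List.range' 2 (k - 2)).map ψ with hrest'
  have hchain1 : List.Chain H.Adj (ψ 1) rest' :=
    chain_of_succ ψ (M := k - 1) (fun s hs => hch s (by omega)) (k - 2) 1 (by omega)
  have hlast : (ψ 1 :: rest').getLast (List.cons_ne_nil _ _) = ψ (k - 1) := by
    have := getLast_cons_map_range' ψ 1 (k - 2)
    rw [hrest', this]
    congr 1
    omega
  have hchain : List.Chain H.Adj (ψ 1) (rest' ++ [ψ 0]) :=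
    chain_append_singleton hchain1 (by rw [hlast]; exact hcl)
  set P := mkWalk H (ψ 1) rest' (ψ 0) hchain with hP
  have hsupp : P.support = ψ 1 :: (rest' ++ [ψ 0]) := mkWalk_support _ _ _ _
  have hnd0 : (ψ 1 :: (rest' ++ [ψ 0])).Nodup := by
    have hmain : (ψ 1 :: (rest' ++ [ψ 0])) = ((1 :: (List.range' 2 (k - 2) ++ [0])).map ψ) := by
      simp [hrest']
    rw [hmain]
    apply List.Nodup.map_on
    · intro a ha b hb hab
      have ha2 : a = 1 ∨ a ∈ List.range' 2 (k - 2) ∨ a = 0 := by simpa using ha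
      have hb2 : b = 1 ∨ b ∈ List.range' 2 (k - 2) ∨ b = 0 := by simpa using hb
      have ha' : a < k := by
        rcases ha2 with rfl | h | rfl
        · omega
        · rw [List.mem_range'] at h; omega
        · omega
      have hb' : b < k := by
        rcases hb2 with rfl | h | rfl
        · omega
        · rw [List.mem_range'] at h; omega
        · omega
      exact hinj a ha' b hb' hab
    · refine List.nodup_cons.mpr ⟨?_, List.Nodup.append List.nodup_range' (List.nodup_singleton 0) ?_⟩
      · intro h
        rcases List.mem_append.mp h with h | h
        · rw [List.mem_range'] at h; omega
        · simp at h
      · intro a ha hb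
        rw [List.mem_range'] at ha
        simp only [List.mem_singleton] at hb
        omega
  have hψ0 : ψ 0 ∉ ψ 1 :: rest' := by
    intro hmem
    have : ψ 0 ∈ (ψ 1 :: (rest' ++ [ψ 0])) := by
      simp only [List.mem_cons, List.mem_append] at hmem ⊢
      tauto
    rcases List.mem_cons.mp hmem with h | h
    · exact absurd (hinj 0 (by omega) 1 hk1 h) (by omega)
    · rw [hrest'] at h
      rcases List.mem_map.mp h with ⟨a, ha, hae⟩
      rw [List.mem_range'] at ha
      exact absurd (hinj a (by omega) 0 (by omega) hae) (by omega)
  have hPpath : P.support.Nodup := by rw [hsupp]; exact hnd0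
  have hadj01 : H.Adj (ψ 0) (ψ 1) := hch 0 (by omega)
  refine ⟨ψ 0, SimpleGraph.Walk.cons hadj01 P, ?_, ?_, ?_⟩
  · rw [SimpleGraph.Walk.isCycle_def]
    refine ⟨?_, by simp, ?_⟩
    · rw [SimpleGraph.Walk.isTrail_def, SimpleGraph.Walk.edges_cons, List.nodup_cons]
      constructor
      · intro hmem
        have := mkWalk_edge_mem (G := H) (ψ 1) rest' (ψ 0) hchain hψ0 _ hmem
          (by rw [Sym2.mem_iff]; left; rfl)
        rw [hlast] at this
        rw [Sym2.eq_iff] at this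
        rcases this with ⟨h1, h2⟩ | ⟨h1, h2⟩
        · exact absurd (hinj 1 hk1 0 (by omega) h2) (by omega)
        · exact absurd (hinj 1 hk1 (k - 1) (by omega) h2) (by omega)
      · exact mkWalk_trail _ _ _ _ hnd0
    · rw [SimpleGraph.Walk.support_cons, List.tail_cons, hsupp]
      exact hnd0
  · rw [SimpleGraph.Walk.length_cons, hP, mkWalk_length]
    rw [hrest']
    simp only [List.length_map, List.length_range']
    omega
  · rw [SimpleGraph.Walk.edges_cons]
    exact List.mem_cons.mpr (Or.inl Sym2.eq_swap)

end CEHelp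


namespace CEHelp

lemma divmod_uniq {q : ℕ} (hq : 0 < q) (i j : ℕ) (hj : j < q) :
    (q * i + j) / q = i ∧ (q * i + j) % q = j := by
  constructor
  · rw [Nat.mul_add_div hq, Nat.div_eq_of_lt hj]; omega
  · rw [Nat.mul_add_mod, Nat.mod_eq_of_lt hj]

lemma gridB (q d A B n k : ℕ) (hq : 2 ≤ q) (hn : d + 2 ≤ n)
    (hB2 : 2 ≤ B) (hBA : B ≤ A) (hAq : A ≤ q + 1) (hA3 : d = 0 → 3 ≤ A)
    (hk : k = d * (q + 1) + A + B) :
    ∃ φ : ℕ → ℕ × ℕ,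
      φ 0 = (0, 0) ∧ φ 1 = (1, 0) ∧ φ (k - 1) = (q, 0) ∧
      (∀ s, s < k → (φ s).1 ≤ q ∧ (φ s).2 < n) ∧
      (∀ s, s + 1 < k → ((φ s).2 = (φ (s+1)).2 ∧ (φ s).1 ≠ (φ (s+1)).1) ∨
          ((φ s).1 = (φ (s+1)).1 ∧ ((φ s).2 + 1 = (φ (s+1)).2 ∨ (φ (s+1)).2 + 1 = (φ s).2))) ∧
      (∀ s₁, s₁ < k → ∀ s₂, s₂ < k → φ s₁ = φ s₂ → s₁ = s₂) := by
  have hq0 : 0 < q := by omega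
  set X1 := q * d with hX1
  set X2 := X1 + (A - 1) with hX2
  set X3 := X2 + (B - 1) with hX3
  have hmul : d * (q + 1) = q * d + d := by ring
  have hcomm : q * d = d * q := by ring
  have hkX : k = X3 + (d + 2) := by omega
  set dir : ℕ → ℕ → ℕ := fun i j => if i % 2 = 0 then j else q - 1 - j with hdir
  set φ : ℕ → ℕ × ℕ := fun s =>
    if s < X1 then (dir (s / q) (s % q), s / q)
    else if s < X2 then (dir d (s - X1), d)
    else if s < X3 then ((if d % 2 = 0 then A - 2 - (s - X2) else q + 1 - A + (s - X2)), d + 1)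
    else if s = X3 then (q, d + 1)
    else (q, k - 1 - s) with hφ
  have hdir_lt : ∀ i j, j < q → dir i j < q := by
    intro i j hj
    by_cases hp : i % 2 = 0 <;> simp only [hdir] <;> [rw [if_pos hp]; rw [if_neg hp]] <;> omega
  have hdir_inj : ∀ i j₁ j₂, j₁ < q → j₂ < q → dir i j₁ = dir i j₂ → j₁ = j₂ := by
    intro i j₁ j₂ h1 h2 h
    by_cases hp : i % 2 = 0 <;> simp only [hdir] at h <;> [rw [if_pos hp, if_pos hp] at h;
      rw [if_neg hp, if_neg hp] at h] <;> omega
  have hev1 : ∀ s, s < X1 → φ s = (dir (s / q) (s % q), s / q) := by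
    intro s hs; simp only [hφ]; rw [if_pos hs]
  have hev1' : ∀ s, s < X1 → ∃ i j, s = q * i + j ∧ j < q ∧ i < d ∧ φ s = (dir i j, i) := by
    intro s hs
    refine ⟨s / q, s % q, (Nat.div_add_mod' s q).symm ▸ ?_, Nat.mod_lt _ hq0, ?_, hev1 s hs⟩
    · rw [Nat.div_add_mod]
    · rw [Nat.div_lt_iff_lt_mul hq0]; omega
  have hev2 : ∀ s, X1 ≤ s → s < X2 → φ s = (dir d (s - X1), d) := by
    intro s h1 h2; simp only [hφ]; rw [if_neg (by omega), if_pos h2]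
  have hev3 : ∀ s, X2 ≤ s → s < X3 →
      φ s = ((if d % 2 = 0 then A - 2 - (s - X2) else q + 1 - A + (s - X2)), d + 1) := by
    intro s h1 h2; simp only [hφ]; rw [if_neg (by omega), if_neg (by omega), if_pos h2]
  have hev4 : φ X3 = (q, d + 1) := by
    simp only [hφ]; rw [if_neg (by omega), if_neg (by omega), if_neg (by omega)]; simp
  have hev5 : ∀ s, X3 < s → φ s = (q, k - 1 - s) := by
    intro s hs
    simp only [hφ]; rw [if_neg (by omega), if_neg (by omega), if_neg (by omega), if_neg (by omega)]
  refine ⟨φ, ?_, ?_, ?_, ?_, ?_, ?_⟩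
  · -- φ 0 = (0,0)
    by_cases hd : d = 0
    · subst hd
      have hx : X1 = 0 := by simp [hX1]
      rw [hev2 0 (by omega) (by have := hA3 rfl; omega)]
      simp [hdir, hx]
    · have hqd : q ≤ q * d := Nat.le_mul_of_pos_right q (by omega)
      rw [hev1 0 (by omega)]
      rw [Nat.zero_div, Nat.zero_mod]
      simp [hdir]
  · -- φ 1 = (1,0)
    by_cases hd : d = 0
    · subst hd
      have hx : X1 = 0 := by simp [hX1]
      rw [hev2 1 (by omega) (by have := hA3 rfl; omega)]
      simp [hdir, hx]
    · have hqd : q ≤ q * d := Nat.le_mul_of_pos_right q (by omega)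
      rw [hev1 1 (by omega)]
      rw [Nat.div_eq_of_lt (by omega), Nat.mod_eq_of_lt (by omega)]
      simp [hdir]
  · -- φ (k-1) = (q, 0)
    rw [hev5 (k - 1) (by omega)]
    congr 1
    omega
  · -- bounds
    intro s hs
    rcases Nat.lt_or_ge s X1 with h1 | h1
    · obtain ⟨i, j, hsij, hj, hi, hevs⟩ := hev1' s h1
      rw [hevs]
      exact ⟨le_of_lt (hdir_lt i j hj), by simp; omega⟩
    rcases Nat.lt_or_ge s X2 with h2 | h2
    · rw [hev2 s h1 h2]
      exact ⟨le_of_lt (hdir_lt d (s - X1) (by omega)), by simp; omega⟩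
    rcases Nat.lt_or_ge s X3 with h3 | h3
    · rw [hev3 s h2 h3]
      constructor
      · by_cases hp : d % 2 = 0 <;> simp only [hp] <;> simp <;> omega
      · simp; omega
    rcases Nat.eq_or_lt_of_le h3 with h4 | h4
    · rw [← h4, hev4]; exact ⟨le_refl _, by simp; omega⟩
    · rw [hev5 s h4]; exact ⟨le_refl _, by simp; omega⟩
  · -- chain
    intro s hsk
    have hev1'' : ∀ i j, j < q → q * i + j < X1 → φ (q * i + j) = (dir i j, i) := by
      intro i j hj hlt
      rw [hev1 _ hlt, (divmod_uniq hq0 i j hj).1, (divmod_uniq hq0 i j hj).2]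
    rcases Nat.lt_or_ge (s+1) X1 with hc1 | hc1
    · obtain ⟨i, j, hsij, hj, hi, hevs⟩ := hev1' s (by omega)
      by_cases hjq : j + 1 < q
      · have h2 : φ (s + 1) = (dir i (j + 1), i) := by
          rw [show s + 1 = q * i + (j + 1) from by omega]
          exact hev1'' i (j+1) hjq (by omega)
        rw [hevs, h2]
        left
        refine ⟨rfl, ?_⟩
        dsimp only
        simp only [hdir]
        by_cases hp : i % 2 = 0
        · rw [if_pos hp, if_pos hp]; omega
        · rw [if_neg hp, if_neg hp]; omega
      · have hj1 : j = q - 1 := by omega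
        have hmm : q * (i + 1) = q * i + q := by ring
        have hs1X : s + 1 = q * (i + 1) + 0 := by omega
        have h2 : φ (s + 1) = (dir (i + 1) 0, i + 1) := by
          rw [hs1X]
          exact hev1'' (i+1) 0 (by omega) (by rw [← hs1X]; omega)
        rw [hevs, h2]
        right
        constructor
        · dsimp only
          simp only [hdir]
          by_cases hp : i % 2 = 0
          · rw [if_pos hp, if_neg (by omega)]; omega
          · rw [if_neg hp, if_pos (by omega)]; omega
        · exact Or.inl rfl
    · rcases Nat.lt_or_ge s X1 with hc2 | hc2
      · -- s + 1 = X1 : boundary R1 → R2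
        have hd1 : 1 ≤ d := by
          by_contra h
          have hd0 : d = 0 := by omega
          have : q * d = 0 := by rw [hd0, mul_zero]
          omega
        have hqd : q * d = q * (d-1) + q := by
          have h1 : d - 1 + 1 = d := by omega
          nth_rewrite 1 [← h1]; ring
        have hs' : s = q * (d-1) + (q-1) := by omega
        have hevs : φ s = (dir (d-1) (q-1), d-1) := by
          rw [hs']; exact hev1'' _ _ (by omega) (by omega)
        have hs1 : s + 1 = X1 := by omega
        have hev2' : φ (s+1) = (dir d 0, d) := by
          rw [hs1]
          have := hev2 X1 le_rfl (by omega)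
          simpa using this
        rw [hevs, hev2']
        right
        constructor
        · dsimp only
          simp only [hdir]
          by_cases hp : (d - 1) % 2 = 0
          · rw [if_pos hp, if_neg (by omega)]; omega
          · rw [if_neg hp, if_pos (by omega)]; omega
        · left; dsimp only; omega
      · rcases Nat.lt_or_ge (s+1) X2 with hc3 | hc3
        · -- R2 internal
          rw [hev2 s hc2 (by omega), hev2 (s+1) (by omega) hc3]
          left
          refine ⟨rfl, ?_⟩
          dsimp only
          intro hcon
          have := hdir_inj d _ _ (by omega) (by omega) hcon
          omega
        · rcases Nat.lt_or_ge s X2 with hc4 | hc4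
          · -- s + 1 = X2 : boundary R2 → R3
            have hs1 : s + 1 = X2 := by omega
            rw [hev2 s hc2 hc4, hs1, hev3 X2 le_rfl (by omega)]
            right
            constructor
            · dsimp only
              simp only [hdir]
              by_cases hp : d % 2 = 0
              · rw [if_pos hp, if_pos hp]; omega
              · rw [if_neg hp, if_neg hp]; omega
            · exact Or.inl rfl
          · rcases Nat.lt_or_ge (s+1) X3 with hc5 | hc5
            · -- R3 internal
              rw [hev3 s hc4 (by omega), hev3 (s+1) (by omega) hc5]
              left
              refine ⟨rfl, ?_⟩
              dsimp only
              by_cases hp : d % 2 = 0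
              · rw [if_pos hp, if_pos hp]; omega
              · rw [if_neg hp, if_neg hp]; omega
            · rcases Nat.lt_or_ge s X3 with hc6 | hc6
              · -- s + 1 = X3
                have hs1 : s + 1 = X3 := by omega
                rw [hev3 s hc4 hc6, hs1, hev4]
                left
                refine ⟨rfl, ?_⟩
                dsimp only
                by_cases hp : d % 2 = 0
                · rw [if_pos hp]; omega
                · rw [if_neg hp]; omega
              · rcases Nat.eq_or_lt_of_le hc6 with hc7 | hc7
                · -- s = X3
                  rw [hev5 (s+1) (by omega), ← hc7, hev4]
                  right
                  refine ⟨rfl, Or.inr ?_⟩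
                  dsimp only
                  omega
                · -- rail internal
                  rw [hev5 s hc7, hev5 (s+1) (by omega)]
                  right
                  exact ⟨rfl, Or.inr (by dsimp only; omega)⟩
  · -- injectivity
    have key : ∀ s, s < k →
        (∃ i j, s = q*i+j ∧ j < q ∧ i < d ∧ dir i j < q ∧ φ s = (dir i j, i)) ∨
        (X1 ≤ s ∧ s < X2 ∧ dir d (s - X1) < q ∧ φ s = (dir d (s - X1), d)) ∨
        (X2 ≤ s ∧ s < X3 ∧ (if d % 2 = 0 then A - 2 - (s - X2) else q + 1 - A + (s - X2)) < q ∧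
          φ s = ((if d % 2 = 0 then A - 2 - (s - X2) else q + 1 - A + (s - X2)), d + 1)) ∨
        (s = X3 ∧ φ s = (q, d + 1)) ∨
        (X3 < s ∧ φ s = (q, k - 1 - s)) := by
      intro s hs
      rcases Nat.lt_or_ge s X1 with h1 | h1
      · obtain ⟨i, j, hsij, hj, hi, hevs⟩ := hev1' s h1
        exact Or.inl ⟨i, j, hsij, hj, hi, hdir_lt i j hj, hevs⟩
      rcases Nat.lt_or_ge s X2 with h2 | h2
      · exact Or.inr (Or.inl ⟨h1, h2, hdir_lt d _ (by omega), hev2 s h1 h2⟩)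
      rcases Nat.lt_or_ge s X3 with h3 | h3
      · refine Or.inr (Or.inr (Or.inl ⟨h2, h3, ?_, hev3 s h2 h3⟩))
        split_ifs <;> omega
      rcases Nat.eq_or_lt_of_le h3 with h4 | h4
      · exact Or.inr (Or.inr (Or.inr (Or.inl ⟨h4.symm, h4 ▸ hev4⟩)))
      · exact Or.inr (Or.inr (Or.inr (Or.inr ⟨h4, hev5 s h4⟩)))
    intro s₁ hs₁ s₂ hs₂ heq
    rcases key s₁ hs₁ with ⟨i₁,j₁,he₁,hj₁,hi₁,hlt₁,hv₁⟩ | ⟨ha₁,hb₁,hlt₁,hv₁⟩ | ⟨ha₁,hb₁,hlt₁,hv₁⟩ | ⟨ha₁,hv₁⟩ | ⟨ha₁,hv₁⟩ <;>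
      rcases key s₂ hs₂ with ⟨i₂,j₂,he₂,hj₂,hi₂,hlt₂,hv₂⟩ | ⟨ha₂,hb₂,hlt₂,hv₂⟩ | ⟨ha₂,hb₂,hlt₂,hv₂⟩ | ⟨ha₂,hv₂⟩ | ⟨ha₂,hv₂⟩ <;>
      rw [hv₁, hv₂, Prod.mk.injEq] at heq <;>
      obtain ⟨hf, hsnd⟩ := heq
    · obtain rfl : i₁ = i₂ := hsnd
      have := hdir_inj i₁ j₁ j₂ hj₁ hj₂ hf
      omega
    · omega
    · omega
    · omega
    · omega
    · omega
    · have := hdir_inj d (s₁ - X1) (s₂ - X1) (by omega) (by omega) hf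
      omega
    · omega
    · omega
    · omega
    · omega
    · omega
    · split_ifs at hf <;> omega
    · omega
    · omega
    · omega
    · omega
    · omega
    · omega
    · omega
    · omega
    · omega
    · omega
    · omega
    · omega

end CEHelp


namespace CEHelp2

open SimpleGraph

lemma getVert_injOn_of_isPath {V : Type*} {G : SimpleGraph V} :
    ∀ {a b : V} (p : G.Walk a b), p.IsPath →
      ∀ i, i ≤ p.length → ∀ j, j ≤ p.length → p.getVert i = p.getVert j → i = j := by
  intro a b p
  induction p with
  | nil => intro _ i hi j hj _; simp at hi hj; omega
  | @cons a c b h p ih =>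
      intro hp i hi j hj hij
      rw [SimpleGraph.Walk.cons_isPath_iff] at hp
      match i, j with
      | 0, 0 => rfl
      | 0, j + 1 =>
          exfalso
          apply hp.2
          rw [SimpleGraph.Walk.mem_support_iff_exists_getVert]
          refine ⟨j, ?_, by simpa using hj⟩
          rw [SimpleGraph.Walk.getVert_cons_succ, SimpleGraph.Walk.getVert_zero] at hij
          exact hij.symm
      | i + 1, 0 =>
          exfalso
          apply hp.2
          rw [SimpleGraph.Walk.mem_support_iff_exists_getVert]
          refine ⟨i, ?_, by simpa using hi⟩
          rw [SimpleGraph.Walk.getVert_cons_succ, SimpleGraph.Walk.getVert_zero] at hij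
          exact hij
      | i + 1, j + 1 =>
          rw [SimpleGraph.Walk.getVert_cons_succ, SimpleGraph.Walk.getVert_cons_succ] at hij
          have := ih hp.1 i (by simpa using hi) j (by simpa using hj) hij
          omega

end CEHelp2


/-- If `G` has a Hamiltonian path starting at `x` and `m ≥ 3`, then every edge
`(u,x)(v,x)` of `K_m □ G` with `u ≠ v` is pancyclic. -/
theorem statement11 {V : Type*} [Fintype V] [DecidableEq V] (G : SimpleGraph V) (x : V)
    (hham : ∃ (y : V) (p : G.Walk x y), p.IsHamiltonian)
    (m : ℕ) (hm : 3 ≤ m) (u v : Fin m) (huv : u ≠ v) :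
    ∀ k, 3 ≤ k → k ≤ m * Fintype.card V →
      CycleThroughEdge ((⊤ : SimpleGraph (Fin m)).boxProd G)
        s((u, x), (v, x)) k := by
  intro k hk3 hkmn
  obtain ⟨y, p, hp⟩ := hham
  set n := Fintype.card V with hn
  have hn1 : 1 ≤ n := Fintype.card_pos_iff.mpr ⟨x⟩
  have hplen : p.length = n - 1 := hp.length_eq
  have hppath : p.IsPath := hp.isPath
  set H := (⊤ : SimpleGraph (Fin m)).boxProd G with hH
  -- the Fin m side: a bijection w with w 0 = v, w 1 = u
  have h0m : (0 : ℕ) < m := by omega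
  have h1m : (1 : ℕ) < m := by omega
  set z0 : Fin m := ⟨0, h0m⟩ with hz0
  set z1 : Fin m := ⟨1, h1m⟩ with hz1
  have hz01 : z0 ≠ z1 := by simp [hz0, hz1, Fin.ext_iff]
  set σ₁ := Equiv.swap z0 v with hσ₁
  set a₀ := σ₁.symm u with ha₀
  set σ₂ := Equiv.swap z1 a₀ with hσ₂
  set w : Fin m → Fin m := fun t => σ₁ (σ₂ t) with hw
  have hwinj : Function.Injective w := fun t₁ t₂ h =>
    σ₂.injective (σ₁.injective h)
  have ha₀0 : a₀ ≠ z0 := by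
    intro h
    apply huv
    have : u = σ₁ z0 := by rw [← h, ha₀, Equiv.apply_symm_apply]
    rw [this, hσ₁, Equiv.swap_apply_left]
  have hw0 : w z0 = v := by
    rw [hw]
    simp only
    rw [hσ₂, Equiv.swap_apply_of_ne_of_ne hz01 (Ne.symm ha₀0)]
    rw [hσ₁, Equiv.swap_apply_left]
  have hw1 : w z1 = u := by
    rw [hw]
    simp only
    rw [hσ₂, Equiv.swap_apply_left, ha₀, Equiv.apply_symm_apply]
  set e : ℕ → Fin m := fun i => w ⟨i % m, Nat.mod_lt _ h0m⟩ with he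
  have he_inj : ∀ i j, i < m → j < m → e i = e j → i = j := by
    intro i j hi hj hij
    have := hwinj hij
    rw [Fin.mk.injEq, Nat.mod_eq_of_lt hi, Nat.mod_eq_of_lt hj] at this
    exact this
  have he0 : e 0 = v := by
    have hmk : (⟨0 % m, Nat.mod_lt _ h0m⟩ : Fin m) = z0 := Fin.ext (by simp [hz0])
    rw [he]
    simp only
    rw [hmk, hw0]
  have he1 : e 1 = u := by
    have hmk : (⟨1 % m, Nat.mod_lt _ h0m⟩ : Fin m) = z1 :=
      Fin.ext (by simp [hz1, Nat.mod_eq_of_lt h1m])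
    rw [he]
    simp only
    rw [hmk, hw1]
  set fV : ℕ → V := fun i => p.getVert i with hfV
  have hfV0 : fV 0 = x := SimpleGraph.Walk.getVert_zero p
  have hfV_inj : ∀ i j, i < n → j < n → fV i = fV j → i = j := by
    intro i j hi hj hij
    exact CEHelp2.getVert_injOn_of_isPath p hppath i (by omega) j (by omega) hij
  have hcol : ∀ i j (z : V), i < m → j < m → i ≠ j → H.Adj (e i, z) (e j, z) := by
    intro i j z hi hj hij
    rw [hH, SimpleGraph.boxProd_adj]
    left
    refine ⟨?_, rfl⟩
    rw [SimpleGraph.top_adj]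
    intro hcon
    exact hij (he_inj i j hi hj hcon)
  have hrow : ∀ i j₁ j₂, j₁ + 1 = j₂ → j₂ < n → H.Adj (e i, fV j₁) (e i, fV j₂) := by
    intro i j₁ j₂ hj hj₂
    rw [hH, SimpleGraph.boxProd_adj]
    right
    refine ⟨?_, rfl⟩
    rw [hfV]
    simp only
    subst hj
    exact SimpleGraph.Walk.adj_getVert_succ p (by omega)
  -- main case split
  by_cases hkm : k ≤ m
  · -- Case A : a cycle inside one K_m layer
    set ψ : ℕ → Fin m × V := fun s => (e s, x) with hψ
    have hres := CEHelp.cycle_via_fn H ψ k hk3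
      (by
        intro s₁ h₁ s₂ h₂ hss
        rw [hψ] at hss
        simp only [Prod.mk.injEq] at hss
        exact he_inj s₁ s₂ (by omega) (by omega) hss.1)
      (by
        intro s hs
        exact hcol s (s+1) x (by omega) (by omega) (by omega))
      (hcol (k-1) 0 x (by omega) (by omega) (by omega))
    have hedge : s(ψ 1, ψ 0) = s(((u : Fin m), x), ((v : Fin m), x)) := by
      rw [hψ]
      simp only
      rw [he0, he1]
    rwa [hedge] at hres
  · -- k > m, hence n ≥ 2
    have hn2 : 2 ≤ n := by
      by_contra h
      have hneq : n = 1 := by omega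
      rw [hneq, mul_one] at hkmn
      omega
    by_cases hk4 : k = 4
    · -- Case C : ladder 4-cycle over two layers
      set ψ : ℕ → Fin m × V := fun s =>
        if s = 0 then (e 0, fV 0) else if s = 1 then (e 1, fV 0)
        else if s = 2 then (e 1, fV 1) else (e 0, fV 1) with hψ
      have hψe0 : ψ 0 = (e 0, fV 0) := by rw [hψ]; norm_num
      have hψe1 : ψ 1 = (e 1, fV 0) := by rw [hψ]; norm_num
      have hψe2 : ψ 2 = (e 1, fV 1) := by rw [hψ]; norm_num
      have hψe3 : ψ 3 = (e 0, fV 1) := by rw [hψ]; norm_num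
      have hx01 : fV 0 ≠ fV 1 := by
        intro h
        exact absurd (hfV_inj 0 1 (by omega) (by omega) h) (by omega)
      have he01 : e 0 ≠ e 1 := by
        intro h
        exact absurd (he_inj 0 1 (by omega) (by omega) h) (by omega)
      have hres := CEHelp.cycle_via_fn H ψ k hk3
        (by
          intro s₁ h₁ s₂ h₂ hss
          have h₁' : s₁ < 4 := by omega
          have h₂' : s₂ < 4 := by omega
          interval_cases s₁ <;> interval_cases s₂
          · rfl
          · rw [hψe0, hψe1, Prod.mk.injEq] at hss; exact absurd hss.1 he01
          · rw [hψe0, hψe2, Prod.mk.injEq] at hss; exact absurd hss.1 he01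
          · rw [hψe0, hψe3, Prod.mk.injEq] at hss; exact absurd hss.2 hx01
          · rw [hψe1, hψe0, Prod.mk.injEq] at hss; exact absurd hss.1 (Ne.symm he01)
          · rfl
          · rw [hψe1, hψe2, Prod.mk.injEq] at hss; exact absurd hss.2 hx01
          · rw [hψe1, hψe3, Prod.mk.injEq] at hss; exact absurd hss.2 hx01
          · rw [hψe2, hψe0, Prod.mk.injEq] at hss; exact absurd hss.1 (Ne.symm he01)
          · rw [hψe2, hψe1, Prod.mk.injEq] at hss; exact absurd hss.2 (Ne.symm hx01)
          · rfl
          · rw [hψe2, hψe3, Prod.mk.injEq] at hss; exact absurd hss.1 (Ne.symm he01)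
          · rw [hψe3, hψe0, Prod.mk.injEq] at hss; exact absurd hss.2 (Ne.symm hx01)
          · rw [hψe3, hψe1, Prod.mk.injEq] at hss; exact absurd hss.1 he01
          · rw [hψe3, hψe2, Prod.mk.injEq] at hss; exact absurd hss.1 he01
          · rfl)
        (by
          intro s hs
          have hs3 : s < 3 := by omega
          interval_cases s
          · rw [hψe0, hψe1]
            exact hcol 0 1 (fV 0) (by omega) (by omega) (by omega)
          · rw [hψe1, hψe2]
            exact hrow 1 0 1 rfl (by omega)
          · rw [hψe2, hψe3]
            exact hcol 1 0 (fV 1) (by omega) (by omega) (by omega))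
        (by
          rw [show k - 1 = 3 from by omega, hψe3, hψe0]
          exact (hrow 0 0 1 rfl (by omega)).symm)
      have hedge : s(ψ 1, ψ 0) = s(((u : Fin m), x), ((v : Fin m), x)) := by
        rw [hψe1, hψe0, he0, he1, hfV0]
      rwa [hedge] at hres
    · -- Case B : the general snake construction
      have hk5 : 5 ≤ k := by omega
      set q := m - 1 with hq
      set d := (k - (m+1)) / m with hd
      set r := (k - (m+1)) % m with hr
      have hdr : m * d + r = k - (m+1) := Nat.div_add_mod _ m
      have hrm : r < m := Nat.mod_lt _ h0m
      set S := m + 1 + r with hS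
      set A := min m (S - 2) with hA
      set B := S - A with hB
      clear_value d r A B
      have hkeq : k = m * d + S := by omega
      have hdn : d + 2 ≤ n := by
        have h1 : m * (d + 1) < m * n := by
          have h2 : m * (d + 1) = m * d + m := by ring
          omega
        have := Nat.lt_of_mul_lt_mul_left h1
        omega
      obtain ⟨φ, hφ0, hφ1, hφlast, hφbd, hφch, hφinj⟩ :=
        CEHelp.gridB q d A B n k (by omega) hdn (by omega) (by omega) (by omega)
          (by intro hd0; have : m * d = 0 := by rw [hd0, mul_zero]
              omega)
          (by have h3 : d * (q + 1) = m * d := by rw [show q + 1 = m from by omega]; ring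
              omega)
      set ψ : ℕ → Fin m × V := fun s => (e (φ s).1, fV (φ s).2) with hψ
      have hres := CEHelp.cycle_via_fn H ψ k hk3
        (by
          intro s₁ h₁ s₂ h₂ hss
          rw [hψ] at hss
          simp only [Prod.mk.injEq] at hss
          obtain ⟨hb₁, hb₂⟩ := hφbd s₁ h₁
          obtain ⟨hb₃, hb₄⟩ := hφbd s₂ h₂
          have hfst : (φ s₁).1 = (φ s₂).1 := he_inj _ _ (by omega) (by omega) hss.1
          have hsnd : (φ s₁).2 = (φ s₂).2 := hfV_inj _ _ hb₂ hb₄ hss.2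
          exact hφinj s₁ h₁ s₂ h₂ (Prod.ext hfst hsnd))
        (by
          intro s hs
          obtain ⟨hb₁, hb₂⟩ := hφbd s (by omega)
          obtain ⟨hb₃, hb₄⟩ := hφbd (s+1) hs
          rcases hφch s hs with ⟨hsnd, hfst⟩ | ⟨hfst, hsnd⟩
          · rw [hψ]
            simp only
            rw [hsnd]
            exact hcol _ _ _ (by omega) (by omega) hfst
          · rw [hψ]
            simp only
            rw [hfst]
            rcases hsnd with h | h
            · exact hrow _ _ _ h (by omega)
            · exact (hrow _ _ _ h (by omega)).symm)
        (by
          rw [hψ]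
          simp only
          rw [hφlast, hφ0]
          simp only
          exact hcol q 0 (fV 0) (by omega) (by omega) (by omega))
      have hedge : s(ψ 1, ψ 0) = s(((u : Fin m), x), ((v : Fin m), x)) := by
        rw [hψ]
        simp only
        rw [hφ0, hφ1]
        simp only
        rw [he0, he1, hfV0]
      rwa [hedge] at hres
end

section
/- Let G be a graph partitioned into induced subgraphs G1 and G2 (i.e., V(G) = V(G1) ⊔ V(G2)) with |V(G1)| ≥ 3. Let x1y1 ∈ E(G1) and x2y2 ∈ E(G2) with x1x2, y1y2 ∈ E(G). If x1y1 is pancyclic in G1 and x2y2 is even pancyclic in G2, then the edge x1x2 is almost pancyclic in G, i.e., it lies in a cycle of every length k with 4 ≤ k ≤ |V(G)|. -/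
open scoped symmDiff

variable {α : Type*} [DecidableEq α]

open SimpleGraph
private lemma drop_first_edge {V : Type*} {G : SimpleGraph V} {u v b : V}
    (r : G.Walk u v) (hr : r.IsPath) (he : s(u, b) ∈ r.edges) :
    ∃ r' : G.Walk b v, r'.IsPath ∧ r'.length + 1 = r.length ∧ r'.support = r.support.tail := by
  cases r with
  | nil => simp at he
  | @cons _ w _ h t =>
    rw [Walk.cons_isPath_iff] at hr
    rw [Walk.edges_cons, List.mem_cons] at he
    rcases he with he | he
    · have hbw : b = w := by
        rcases Sym2.eq_iff.mp he with ⟨-, h2⟩ | ⟨h1, -⟩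
        · exact h2
        · exact absurd h1 h.ne
      subst hbw
      exact ⟨t, hr.1, by simp, by simp⟩
    · exact absurd (t.fst_mem_support_of_mem_edges he) hr.2

private lemma path_of_cycle_edge {V : Type*} {G : SimpleGraph V} {a b : V}
    (c : G.Walk a a) (hc : c.IsCycle) (he : s(a, b) ∈ c.edges) :
    ∃ p : G.Walk a b, p.IsPath ∧ p.length + 1 = c.length := by
  cases c with
  | nil => simp at he
  | @cons _ w _ h q =>
    obtain ⟨hq, -⟩ := (Walk.cons_isCycle_iff q h).mp hc
    rw [Walk.edges_cons, List.mem_cons] at he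
    rcases he with he | he
    · have hbw : b = w := by
        rcases Sym2.eq_iff.mp he with ⟨-, h2⟩ | ⟨h1, -⟩
        · exact h2
        · exact absurd h1 h.ne
      subst hbw
      exact ⟨q.reverse, hq.reverse, by simp⟩
    · have he' : s(a, b) ∈ q.reverse.edges := by
        rw [Walk.edges_reverse, List.mem_reverse]; exact he
      obtain ⟨r', hr', hlen, hsup⟩ := drop_first_edge q.reverse hq.reverse he'
      refine ⟨Walk.cons h r'.reverse, ?_, ?_⟩
      · apply Walk.IsPath.cons hr'.reverse
        rw [Walk.support_reverse, List.mem_reverse, hsup]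
        intro hmem
        have hnd := hq.reverse.support_nodup
        rw [Walk.support_eq_cons, List.nodup_cons] at hnd
        exact hnd.1 hmem
      · have := Walk.length_reverse q
        have := Walk.length_reverse r'
        simp only [Walk.length_cons] at *
        omega
  
private lemma path_of_cte {V : Type*} {G : SimpleGraph V} {a b : V} {k : ℕ}
    (h : CycleThroughEdge G s(a, b) k) :
    ∃ p : G.Walk a b, p.IsPath ∧ p.length + 1 = k := by
  classical
  obtain ⟨v, c, hc, hlen, he⟩ := h
  have ha : a ∈ c.support := c.fst_mem_support_of_mem_edges he
  have he' : s(a, b) ∈ (c.rotate a ha).edges := (c.rotate_edges a ha).mem_iff.mpr he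
  obtain ⟨p, hp, hl⟩ := path_of_cycle_edge _ (hc.rotate ha) he'
  have hlr : (c.rotate a ha).length = c.length := by
    rw [← Walk.length_edges, ← Walk.length_edges]
    exact (c.rotate_edges a ha).perm.length_eq
  exact ⟨p, hp, by omega⟩

private lemma combine_paths {V : Type*} {G : SimpleGraph V} {s : Set V}
    {x₁ y₁ : ↥s} {x₂ y₂ : ↥sᶜ}
    (hx : G.Adj ↑x₁ ↑x₂) (hy : G.Adj ↑y₁ ↑y₂) (hne : (x₁ : V) ≠ ↑y₁)
    (P₁ : (G.induce s).Walk x₁ y₁) (hP₁ : P₁.IsPath)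
    (P₂ : (G.induce sᶜ).Walk x₂ y₂) (hP₂ : P₂.IsPath) :
    CycleThroughEdge G s((x₁ : V), (x₂ : V)) (P₁.length + P₂.length + 2) := by
  let f₁ : G.induce s →g G := ⟨Subtype.val, fun h => h⟩
  let f₂ : G.induce sᶜ →g G := ⟨Subtype.val, fun h => h⟩
  let P₁' : G.Walk ↑x₁ ↑y₁ := P₁.map f₁
  let P₂' : G.Walk ↑x₂ ↑y₂ := P₂.map f₂
  have hP₁' : P₁'.IsPath := Walk.map_isPath_of_injective Subtype.val_injective hP₁
  have hP₂' : P₂'.IsPath := Walk.map_isPath_of_injective Subtype.val_injective hP₂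
  have mem₁ : ∀ v ∈ P₁'.support, v ∈ s := by
    intro v hv
    rw [Walk.support_map, List.mem_map] at hv
    obtain ⟨u, -, rfl⟩ := hv
    exact u.2
  have mem₂ : ∀ v ∈ P₂'.support, v ∈ sᶜ := by
    intro v hv
    rw [Walk.support_map, List.mem_map] at hv
    obtain ⟨u, -, rfl⟩ := hv
    exact u.2
  let Q : G.Walk ↑y₁ ↑x₂ := Walk.cons hy P₂'.reverse
  let P : G.Walk ↑x₁ ↑x₂ := P₁'.append Q
  have hxnotedge : ∀ l : List (Sym2 V), (∀ e ∈ l, ∀ a, a ∈ e → a ∈ sᶜ) → True := fun _ _ => trivial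
  have hPpath : P.IsPath := by
    rw [Walk.isPath_def, Walk.support_append]
    apply List.Nodup.append hP₁'.support_nodup
    · show (Q.support).tail.Nodup
      have : Q.support = ↑y₁ :: P₂'.reverse.support := rfl
      rw [this, List.tail_cons]
      exact hP₂'.reverse.support_nodup
    · intro v hv1 hv2
      have : Q.support = ↑y₁ :: P₂'.reverse.support := rfl
      rw [this, List.tail_cons, Walk.support_reverse, List.mem_reverse] at hv2
      exact mem₂ v hv2 (mem₁ v hv1)
  have hPedge : s((x₂ : V), (x₁ : V)) ∉ P.edges := by
    rw [Walk.edges_append, List.mem_append]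
    rintro (h | h)
    · exact x₂.2 (mem₁ _ (Walk.fst_mem_support_of_mem_edges _ h))
    · have : Q.edges = s((y₁ : V), (y₂ : V)) :: P₂'.reverse.edges := rfl
      rw [this, List.mem_cons] at h
      rcases h with h | h
      · rcases Sym2.eq_iff.mp h with ⟨h1, -⟩ | ⟨-, h2⟩
        · exact x₂.2 (h1 ▸ y₁.2)
        · exact hne h2
      · rw [Walk.edges_reverse, List.mem_reverse] at h
        exact (mem₂ _ (Walk.snd_mem_support_of_mem_edges _ h)) x₁.2
  refine ⟨↑x₂, Walk.cons hx.symm P, ?_, ?_, ?_⟩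
  · exact (Walk.cons_isCycle_iff P hx.symm).mpr ⟨hPpath, hPedge⟩
  · show P.length + 1 = _
    have h1 : P.length = P₁'.length + Q.length := Walk.length_append _ _
    have h2 : Q.length = P₂'.reverse.length + 1 := rfl
    have h3 : P₁'.length = P₁.length := Walk.length_map _ _
    have h4 : P₂'.length = P₂.length := Walk.length_map _ _
    have h5 := Walk.length_reverse P₂'
    omega
  · rw [Walk.edges_cons, List.mem_cons]
    left
    exact Sym2.eq_swap

/-- If `V(G)` is partitioned into `s` and `sᶜ` with `|s| ≥ 3`, the edge `x₁y₁` of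
the subgraph induced on `s` is pancyclic there, the edge `x₂y₂` of the subgraph
induced on `sᶜ` is even pancyclic there, and `x₁x₂, y₁y₂ ∈ E(G)`, then `x₁x₂` is
almost pancyclic in `G`. -/
theorem statement12 {V : Type*} [Fintype V] (G : SimpleGraph V) (s : Set V)
    [Fintype ↥s] [Fintype ↥sᶜ]
    (x₁ y₁ : ↥s) (x₂ y₂ : ↥sᶜ)
    (h3 : 3 ≤ Fintype.card ↥s)
    (he1 : (G.induce s).Adj x₁ y₁) (he2 : (G.induce sᶜ).Adj x₂ y₂)
    (hx : G.Adj ↑x₁ ↑x₂) (hy : G.Adj ↑y₁ ↑y₂)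
    (hp1 : EdgePancyclic (G.induce s) s(x₁, y₁))
    (hp2 : EdgeEvenPancyclic (G.induce sᶜ) s(x₂, y₂)) :
    EdgeAlmostPancyclic G s((↑x₁ : V), (↑x₂ : V)) := by

  classical
  intro k hk4 hkn
  set n₁ := Fintype.card ↥s with hn₁def
  set n₂ := Fintype.card ↥sᶜ with hn₂def
  have ncard : Fintype.card V = n₁ + n₂ := by
    rw [hn₁def, hn₂def, ← Fintype.card_sum]
    exact (Fintype.card_congr (Equiv.Set.sumCompl s)).symm
  have hkn' : k ≤ n₁ + n₂ := ncard ▸ hkn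
  have hn₂2 : 2 ≤ n₂ := Fintype.one_lt_card_iff_nontrivial.mpr ⟨x₂, y₂, he2.ne⟩
  have hne : (x₁ : V) ≠ ↑y₁ := Subtype.coe_ne_coe.mpr he1.ne
  have exP₁ : ∀ p, 1 ≤ p → p ≤ n₁ - 1 →
      ∃ P : (G.induce s).Walk x₁ y₁, P.IsPath ∧ P.length = p := by
    intro p hp1' hp2'
    rcases eq_or_lt_of_le hp1' with h1 | h1
    · refine ⟨Walk.cons he1 Walk.nil, ?_, h1 ▸ rfl⟩
      exact Walk.IsPath.nil.cons (by simp [he1.ne])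
    · obtain ⟨P, hP, hl⟩ := path_of_cte (hp1 (p + 1) (by omega) (by omega))
      exact ⟨P, hP, by omega⟩
  have exP₂ : ∀ q, q = 1 ∨ (3 ≤ q + 1 ∧ q + 1 ≤ n₂ ∧ (Even (q + 1) ∨ q + 1 = n₂)) →
      ∃ P : (G.induce sᶜ).Walk x₂ y₂, P.IsPath ∧ P.length = q := by
    rintro q (rfl | ⟨hq1, hq2, hq3⟩)
    · refine ⟨Walk.cons he2 Walk.nil, ?_, rfl⟩
      exact Walk.IsPath.nil.cons (by simp [he2.ne])
    · obtain ⟨P, hP, hl⟩ := path_of_cte (hp2 (q + 1) hq1 hq2 hq3)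
      exact ⟨P, hP, by omega⟩
  have key : ∀ p q, 1 ≤ p → p ≤ n₁ - 1 →
      (q = 1 ∨ (3 ≤ q + 1 ∧ q + 1 ≤ n₂ ∧ (Even (q + 1) ∨ q + 1 = n₂))) →
      p + q + 2 = k → CycleThroughEdge G s((↑x₁ : V), (↑x₂ : V)) k := by
    intro p q hpa hpb hq hpq
    obtain ⟨P₁, hP₁, hl₁⟩ := exP₁ p hpa hpb
    obtain ⟨P₂, hP₂, hl₂⟩ := exP₂ q hq
    have := combine_paths hx hy hne P₁ hP₁ P₂ hP₂
    rwa [hl₁, hl₂, hpq] at this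
  by_cases h1 : k ≤ n₁ + 2
  · exact key (k - 3) 1 (by omega) (by omega) (Or.inl rfl) (by omega)
  · by_cases h2 : (k - n₁) % 2 = 0
    · refine key (n₁ - 1) (k - n₁ - 1) (by omega) (by omega)
        (Or.inr ⟨by omega, by omega, Or.inl (Nat.even_iff.mpr (by omega))⟩) (by omega)
    · by_cases h3' : k ≤ n₁ + n₂ - 1
      · refine key (n₁ - 2) (k - n₁) (by omega) (by omega)
          (Or.inr ⟨by omega, by omega, Or.inl (Nat.even_iff.mpr (by omega))⟩) (by omega)
      · refine key (n₁ - 1) (n₂ - 1) (by omega) (by omega)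
          (Or.inr ⟨by omega, by omega, Or.inr (by omega)⟩) (by omega)
end

section
/- Let M be an even delta-matroid. Every almost pancyclic edge of the basis graph BG(M) is even pancyclic. (Equivalently: if M has exactly three bases then BG(M) is a triangle, and every even delta-matroid has no pair of bases B, B' with |B △ B'| ≥ 4 when it has only three bases.) -/
open scoped symmDiff

variable {α : Type*} [DecidableEq α]

lemma three_bases_diff_two (M : DeltaMatroid α) (hM : M.IsEven) (hcard : M.B.card = 3)
    {B₁ B₂ : Finset α} (h1 : B₁ ∈ M.B) (h2 : B₂ ∈ M.B) (hne : B₁ ≠ B₂) :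
    (B₁ ∆ B₂).card = 2 := by
  -- the symmetric difference is nonempty and even
  have hparity : (B₁ ∆ B₂).card % 2 = 0 := by
    have := hM B₁ h1 B₂ h2
    have := card_symmDiff_mod_two B₁ B₂
    omega
  have hpos : 0 < (B₁ ∆ B₂).card := by
    rcases Finset.eq_empty_or_nonempty (B₁ ∆ B₂) with h | h
    · exact absurd (by simpa [symmDiff_eq_bot] using h) hne
    · exact Finset.card_pos.mpr h
  by_contra hnot2
  have hge4 : 4 ≤ (B₁ ∆ B₂).card := by omega
  -- the third basis
  have hdiffcard : (M.B \ {B₁, B₂}).card = 1 := by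
    have hsub : ({B₁, B₂} : Finset (Finset α)) ⊆ M.B := by
      intro x hx
      rcases Finset.mem_insert.mp hx with h | h
      · exact h ▸ h1
      · exact (Finset.mem_singleton.mp h) ▸ h2
    have h2c : ({B₁, B₂} : Finset (Finset α)).card = 2 := by
      rw [Finset.card_insert_of_notMem (by simpa using hne), Finset.card_singleton]
    rw [Finset.card_sdiff_of_subset hsub, h2c, hcard]
  obtain ⟨C, hC⟩ := Finset.card_eq_one.mp hdiffcard
  have hCmem : C ∈ M.B := by
    have : C ∈ M.B \ {B₁, B₂} := hC ▸ Finset.mem_singleton_self C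
    exact (Finset.mem_sdiff.mp this).1
  have hmem_cases : ∀ D ∈ M.B, D = B₁ ∨ D = B₂ ∨ D = C := by
    intro D hD
    by_cases h : D = B₁ ∨ D = B₂
    · tauto
    · push_neg at h
      right; right
      have : D ∈ M.B \ {B₁, B₂} := Finset.mem_sdiff.mpr ⟨hD, by simp [h.1, h.2]⟩
      rw [hC] at this
      exact Finset.mem_singleton.mp this
  -- every element of B₁ ∆ B₂ is in B₁ ∆ C, and B₁ ∆ C has card 2
  have key : ∀ e ∈ B₁ ∆ B₂, B₁ ∆ C = {e, _root_.id e} ∨ ∃ f, e ≠ f ∧ B₁ ∆ C = {e, f} := by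
    intro e he
    obtain ⟨f, hf, hB⟩ := M.exchange B₁ h1 B₂ h2 e he
    have hef : e ≠ f := by
      rintro rfl
      have hp1 := hM B₁ h1 _ hB
      rw [show ({e, e} : Finset α) = {e} by simp] at hp1
      have hp2 := card_symmDiff_mod_two B₁ ({e} : Finset α)
      rw [Finset.card_singleton] at hp2
      omega
    have hDne1 : B₁ ∆ ({e, f} : Finset α) ≠ B₁ := by
      intro h
      have h2 : (∅ : Finset α) = {e, f} := by
        have := congrArg (fun S => B₁ ∆ S) h
        simpa [symmDiff_symmDiff_cancel_left, symmDiff_self] using this.symm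
      exact (Finset.insert_ne_empty e {f}) h2.symm
    have hDne2 : B₁ ∆ ({e, f} : Finset α) ≠ B₂ := by
      intro h
      have hcard2 : (B₁ ∆ B₂).card = 2 := by
        have : B₁ ∆ B₂ = {e, f} := by
          rw [← h, symmDiff_symmDiff_cancel_left]
        rw [this, Finset.card_insert_of_notMem (by simpa using hef), Finset.card_singleton]
      omega
    have hDC : B₁ ∆ ({e, f} : Finset α) = C := by
      rcases hmem_cases _ hB with h | h | h
      · exact absurd h hDne1
      · exact absurd h hDne2
      · exact h
    right
    exact ⟨f, hef, by rw [← hDC, symmDiff_symmDiff_cancel_left]⟩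
  have hsub : B₁ ∆ B₂ ⊆ B₁ ∆ C := by
    intro e he
    rcases key e he with h | ⟨f, hef, h⟩
    · rw [h]; simp
    · rw [h]; simp
  have : (B₁ ∆ B₂).card ≤ (B₁ ∆ C).card := Finset.card_le_card hsub
  obtain ⟨e, he⟩ := Finset.card_pos.mp hpos
  rcases key e he with h | ⟨f, hef, h⟩
  · have : (B₁ ∆ C).card ≤ 2 := by rw [h]; exact Finset.card_insert_le _ _ |>.trans (by simp)
    omega
  · have : (B₁ ∆ C).card = 2 := by
      rw [h, Finset.card_insert_of_notMem (by simpa using hef), Finset.card_singleton]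
    omega

/-- In the basis graph of an even delta-matroid, every almost pancyclic edge is
even pancyclic. -/
theorem statement13 (M : DeltaMatroid α) (hM : M.IsEven) (e : Sym2 ↥M.B)
    (he : e ∈ M.BG.edgeSet) (hap : EdgeAlmostPancyclic M.BG e) :
    EdgeEvenPancyclic M.BG e := by
  intro k hk3 hkn hev
  rcases Nat.lt_or_ge k 4 with hk4 | hk4
  swap
  · exact hap k hk4 hkn
  -- k = 3 and k = Fintype.card
  have hk : k = 3 := by omega
  subst hk
  have hn3 : Fintype.card ↥M.B = 3 := by
    rcases hev with h | h
    · exact absurd h (by decide)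
    · exact h.symm
  have hcard : M.B.card = 3 := by rwa [Fintype.card_coe] at hn3
  induction e using Sym2.ind with
  | _ a b =>
  rw [SimpleGraph.mem_edgeSet] at he
  have hab : a ≠ b := he.ne
  -- find a third vertex
  have : ∃ c : ↥M.B, c ≠ a ∧ c ≠ b := by
    by_contra h
    push_neg at h
    have hsub : (Finset.univ : Finset ↥M.B) ⊆ {a, b} := by
      intro c _
      by_cases hca : c = a
      · simp [hca]
      · simp [h c hca]
    have := Finset.card_le_card hsub
    have h2 : ({a, b} : Finset ↥M.B).card ≤ 2 :=
      (Finset.card_insert_le _ _).trans (by simp)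
    rw [Finset.card_univ, hn3] at this
    omega
  obtain ⟨c, hca, hcb⟩ := this
  have adj : ∀ x y : ↥M.B, x ≠ y → M.BG.Adj x y := by
    intro x y hxy
    exact three_bases_diff_two M hM hcard x.2 y.2 (fun h => hxy (Subtype.ext h))
  have hbc : M.BG.Adj b c := adj b c (fun h => hcb h.symm)
  have hcaadj : M.BG.Adj c a := adj c a hca
  refine ⟨a, SimpleGraph.Walk.cons he (SimpleGraph.Walk.cons hbc
    (SimpleGraph.Walk.cons hcaadj SimpleGraph.Walk.nil)), ?_, by simp, by simp⟩
  simp [SimpleGraph.Walk.isCycle_def, SimpleGraph.Walk.isTrail_def, Sym2.eq, Sym2.rel_iff',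
    hab, hca, hcb, hab.symm, Ne.symm hca, Ne.symm hcb]
end
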